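/- arXiv:1009.3394 — 8 statements merged into one kernel-verified Lean document; each statement's English description precedes it below -/
import Mathlib

section
/- Let G be a connected finite simple graph on at least two vertices. Then G is a threshold graph if and only if one of the following holds: (i) there exist k ≥ 1 and positive integers m₁,…,m_{2k} with m₁ ≥ 2 such that G is isomorphic to Γ(m₁,…,m_{2k}) = ((((O_{m₁} ∨ K_{m₂}) ∪ O_{m₃}) ∨ K_{m₄}) ⋯ ) ∨ K_{m_{2k}}; or (ii) there exist k ≥ 0 and positive integers m₁,…,m_{2k+1} with m₁ ≥ 2 such that G is isomorphic to Γ(m₁,…,m_{2k+1}) = ((((K_{m₁} ∪ O_{m₂}) ∨ K_{m₃}) ∪ O_{m₄}) ⋯ ) ∨ K_{m_{2k+1}}. -/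
open Finset

/-- `sig m l = m 1 + ⋯ + m l` (block sizes `m` are indexed starting from 1). -/
def sig (m : ℕ → ℕ) (l : ℕ) : ℕ := ∑ i ∈ Finset.Icc 1 l, m i

/-- The (1-based) index of the block containing the (0-based) vertex `v`:
`blk r m v = b` iff `sig m (b-1) ≤ v < sig m b`. -/
def blk (r : ℕ) (m : ℕ → ℕ) (v : ℕ) : ℕ :=
  1 + ((Finset.Icc 1 r).filter (fun l => sig m l ≤ v)).card

/-- `Γ(m₁,…,m_r) = ((((O_{m₁} ∨ K_{m₂}) ∪ O_{m₃}) ∨ K_{m₄}) ⋯ )`: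
the odd-indexed blocks are added as sets of isolated vertices (disjoint union with `O_{m_l}`)
and the even-indexed blocks are cliques joined to everything already present.  Hence two
distinct vertices are adjacent iff the larger of their two block indices is even.  Vertices
are labelled `0,…,n-1` (`n = m₁+⋯+m_r`), block `B₁` first, then `B₂`, etc. -/
def GammaEven (r : ℕ) (m : ℕ → ℕ) : SimpleGraph (Fin (sig m r)) where
  Adj u v := u ≠ v ∧ (max (blk r m (u : ℕ)) (blk r m (v : ℕ))) % 2 = 0
  symm := by
    constructor
    intro u v h
    exact ⟨h.1.symm, by rw [max_comm]; exact h.2⟩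
  loopless := by constructor; intro u h; exact h.1 rfl

/-- `Γ(m₁,…,m_r) = ((((K_{m₁} ∪ O_{m₂}) ∨ K_{m₃}) ∪ O_{m₄}) ⋯ )`:
here the odd-indexed blocks are the joined cliques (`B₁ = K_{m₁}`), so two distinct
vertices are adjacent iff the larger of their two block indices is odd. -/
def GammaOdd (r : ℕ) (m : ℕ → ℕ) : SimpleGraph (Fin (sig m r)) where
  Adj u v := u ≠ v ∧ (max (blk r m (u : ℕ)) (blk r m (v : ℕ))) % 2 = 1
  symm := by
    constructor
    intro u v h
    exact ⟨h.1.symm, by rw [max_comm]; exact h.2⟩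
  loopless := by constructor; intro u h; exact h.1 rfl

/-- Add a new vertex to `G`: dominating (adjacent to all existing vertices) if
`dom = true`, isolated otherwise. -/
def SimpleGraph.addVertex {V : Type} (G : SimpleGraph V) (dom : Bool) :
    SimpleGraph (Option V) where
  Adj u v :=
    match u, v with
    | some a, some b => G.Adj a b
    | some _, none => dom = true
    | none, some _ => dom = true
    | none, none => False
  symm := by
    constructor
    intro u v h
    match u, v with
    | some a, some b => exact G.adj_symm h
    | some a, none => exact h
    | none, some b => exact h
    | none, none => exact h
  loopless := by
    constructor
    intro u h
    match u with
    | some a => exact G.irrefl h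
    | none => exact h

/-- The graphs obtainable from the one-vertex graph by repeatedly adding either an
isolated vertex or a dominating vertex. -/
inductive IsThresholdOn : ∀ V : Type, SimpleGraph V → Prop
  | single : IsThresholdOn PUnit ⊥
  | step (V : Type) (G : SimpleGraph V) (dom : Bool) :
      IsThresholdOn V G → IsThresholdOn (Option V) (G.addVertex dom)

/-- `G` is a threshold graph: it is isomorphic to a graph produced by the threshold
construction. -/
def IsThreshold {V : Type} (G : SimpleGraph V) : Prop :=
  ∃ (W : Type) (H : SimpleGraph W), IsThresholdOn W H ∧ Nonempty (G ≃g H)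


def ThGraph (n : ℕ) (d : ℕ → Bool) : SimpleGraph (Fin n) where
  Adj u v := u ≠ v ∧ d (max (u : ℕ) (v : ℕ)) = true
  symm := by constructor; intro u v h; exact ⟨h.1.symm, by rw [max_comm]; exact h.2⟩
  loopless := by constructor; intro u h; exact h.1 rfl

lemma thGraph_adj {n : ℕ} {d : ℕ → Bool} {u v : Fin n} :
    (ThGraph n d).Adj u v ↔ u ≠ v ∧ d (max (u : ℕ) (v : ℕ)) = true := Iff.rfl

lemma thGraph_congr {n : ℕ} {d d' : ℕ → Bool} (h : ∀ i, i < n → d i = d' i) :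
    ThGraph n d = ThGraph n d' := by
  ext u v
  rw [thGraph_adj, thGraph_adj, h (max (u:ℕ) v) (by omega)]

def addVertexIso {V W : Type} {G : SimpleGraph V} {H : SimpleGraph W} (e : G ≃g H)
    (dom : Bool) : (G.addVertex dom) ≃g (H.addVertex dom) where
  toEquiv := Equiv.optionCongr e.toEquiv
  map_rel_iff' := by
    intro u v
    match u, v with
    | some a, some b => exact e.map_rel_iff
    | some a, none => exact Iff.rfl
    | none, some b => exact Iff.rfl
    | none, none => exact Iff.rfl

def thGraphSuccIso (n : ℕ) (d : ℕ → Bool) :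
    ThGraph (n + 1) d ≃g (ThGraph n d).addVertex (d n) where
  toEquiv := finSuccEquivLast
  map_rel_iff' := by
    intro u v
    induction u using Fin.lastCases with
    | last =>
      induction v using Fin.lastCases with
      | last =>
        simp only [finSuccEquivLast_last]
        exact ⟨fun h => h.elim, fun h => absurd rfl h.1⟩
      | cast j =>
        simp only [finSuccEquivLast_last, finSuccEquivLast_castSucc]
        show (d n = true) ↔ _
        rw [thGraph_adj]
        have hj : (j : ℕ) < n := j.isLt
        have hm : max ((Fin.last n : Fin (n+1)) : ℕ) ((Fin.castSucc j : Fin (n+1)) : ℕ) = n := by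
          rw [Fin.val_last, Fin.coe_castSucc]; omega
        rw [hm]
        refine ⟨fun h => ⟨?_, h⟩, fun h => h.2⟩
        intro hc
        have := congrArg Fin.val hc
        rw [Fin.val_last, Fin.coe_castSucc] at this; omega
    | cast i =>
      induction v using Fin.lastCases with
      | last =>
        simp only [finSuccEquivLast_last, finSuccEquivLast_castSucc]
        show (d n = true) ↔ _
        rw [thGraph_adj]
        have hi : (i : ℕ) < n := i.isLt
        have hm : max ((Fin.castSucc i : Fin (n+1)) : ℕ) ((Fin.last n : Fin (n+1)) : ℕ) = n := by
          rw [Fin.val_last, Fin.coe_castSucc]; omega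
        rw [hm]
        refine ⟨fun h => ⟨?_, h⟩, fun h => h.2⟩
        intro hc
        have := congrArg Fin.val hc
        rw [Fin.val_last, Fin.coe_castSucc] at this; omega
      | cast j =>
        simp only [finSuccEquivLast_castSucc]
        show (ThGraph n d).Adj i j ↔ _
        rw [thGraph_adj, thGraph_adj]
        simp only [Fin.coe_castSucc]
        refine and_congr ?_ Iff.rfl
        constructor
        · exact fun h1 hc => h1 (Fin.castSucc_injective n hc)
        · exact fun h1 hc => h1 (congrArg (Fin.castSucc) hc)

lemma isThreshold_of_iso {V W : Type} {G : SimpleGraph V} {H : SimpleGraph W}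
    (e : G ≃g H) (h : IsThreshold H) : IsThreshold G := by
  obtain ⟨W', H', h1, ⟨e'⟩⟩ := h
  exact ⟨W', H', h1, ⟨e.trans e'⟩⟩

def thGraphOneIso (d : ℕ → Bool) : ThGraph 1 d ≃g (⊥ : SimpleGraph PUnit) where
  toEquiv := Equiv.equivPUnit (Fin 1)
  map_rel_iff' := by
    intro u v
    simp only [SimpleGraph.bot_adj, false_iff]
    rw [thGraph_adj]
    rintro ⟨h1, -⟩
    exact h1 (Subsingleton.elim u v)

lemma thGraph_isThreshold (d : ℕ → Bool) : ∀ n, 1 ≤ n → IsThreshold (ThGraph n d) := by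
  intro n
  induction n with
  | zero => omega
  | succ n ih =>
    intro _
    rcases Nat.eq_or_lt_of_le (Nat.one_le_iff_ne_zero.mpr (by omega) : 1 ≤ n + 1) with h | h
    · -- n = 0
      have hn : n = 0 := by omega
      subst hn
      exact ⟨PUnit, ⊥, IsThresholdOn.single, ⟨thGraphOneIso d⟩⟩
    · have hn : 1 ≤ n := by omega
      obtain ⟨W, H, hon, ⟨e⟩⟩ := ih hn
      refine ⟨Option W, H.addVertex (d n), IsThresholdOn.step W H (d n) hon, ?_⟩
      exact ⟨(thGraphSuccIso n d).trans (addVertexIso e (d n))⟩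

lemma isThresholdOn_to_th {W : Type} {H : SimpleGraph W} (h : IsThresholdOn W H) :
    ∃ (n : ℕ) (d : ℕ → Bool), 1 ≤ n ∧ Nonempty (H ≃g ThGraph n d) := by
  induction h with
  | single => exact ⟨1, fun _ => false, le_refl 1, ⟨(thGraphOneIso _).symm⟩⟩
  | step W G dom _ ih =>
    obtain ⟨n, d, hn, ⟨e⟩⟩ := ih
    set d' : ℕ → Bool := Function.update d n dom with hd'
    refine ⟨n + 1, d', by omega, ?_⟩
    have h1 : ThGraph n d = ThGraph n d' := by
      apply thGraph_congr
      intro i hi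
      rw [hd', Function.update_of_ne (by omega)]
    have e2 : (G.addVertex dom) ≃g (ThGraph n d').addVertex dom := h1 ▸ addVertexIso e dom
    have hd : d' n = dom := Function.update_self n dom d
    have e3 : (ThGraph n d').addVertex dom ≃g ThGraph (n + 1) d' := by
      rw [← hd]; exact (thGraphSuccIso n d').symm
    exact ⟨e2.trans e3⟩

/-- `chg d v` = number of runs of the sequence `d 0, …, d v`. -/
def chg (d : ℕ → Bool) (v : ℕ) : ℕ :=
  1 + ((Icc 1 v).filter (fun i => d i ≠ d (i - 1))).card

lemma chg_zero (d : ℕ → Bool) : chg d 0 = 1 := by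
  simp [chg]

lemma chg_succ (d : ℕ → Bool) (v : ℕ) :
    chg d (v + 1) = chg d v + (if d (v + 1) = d v then 0 else 1) := by
  unfold chg
  have h1 : Icc 1 (v + 1) = insert (v + 1) (Icc 1 v) := by
    ext i; simp [Finset.mem_insert]; omega
  rw [h1, filter_insert]
  by_cases h : d (v + 1) = d v
  · rw [if_neg, if_pos h]
    · omega
    · simp only [Nat.add_sub_cancel]
      exact fun hc => hc h
  · rw [if_pos, if_neg h]
    · rw [card_insert_of_notMem (by simp)]
      omega
    · simpa using h
  
lemma chg_pos (d : ℕ → Bool) (v : ℕ) : 1 ≤ chg d v := by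
  unfold chg; omega

lemma chg_mono (d : ℕ → Bool) : Monotone (chg d) := by
  intro a b hab
  unfold chg
  have : (Icc 1 a).filter (fun i => d i ≠ d (i - 1)) ⊆
      (Icc 1 b).filter (fun i => d i ≠ d (i - 1)) := by
    apply filter_subset_filter
    exact Icc_subset_Icc_right hab
  have := card_le_card this
  omega

lemma chg_parity (d : ℕ → Bool) (v : ℕ) : d v = d 0 ↔ chg d v % 2 = 1 := by
  induction v with
  | zero => simp [chg_zero]
  | succ v ih =>
    rw [chg_succ]
    by_cases h : d (v + 1) = d v
    · rw [if_pos h, h]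
      simpa using ih
    · rw [if_neg h]
      cases h1 : d v <;> cases h2 : d (v + 1) <;> cases h0 : d 0 <;>
        simp_all <;> omega

lemma exists_chg_eq (d : ℕ → Bool) (v l : ℕ) (h1 : 1 ≤ l) (h2 : l ≤ chg d v) :
    ∃ w, w ≤ v ∧ chg d w = l := by
  induction v with
  | zero =>
    rw [chg_zero] at h2
    exact ⟨0, le_refl 0, by rw [chg_zero]; omega⟩
  | succ v ih =>
    rw [chg_succ] at h2
    by_cases h : d (v + 1) = d v
    · rw [if_pos h] at h2
      obtain ⟨w, hw1, hw2⟩ := ih (by omega)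
      exact ⟨w, by omega, hw2⟩
    · rw [if_neg h] at h2
      rcases Nat.lt_or_ge l (chg d v + 1) with hl | hl
      · obtain ⟨w, hw1, hw2⟩ := ih (by omega)
        exact ⟨w, by omega, hw2⟩
      · refine ⟨v + 1, le_refl _, ?_⟩
        rw [chg_succ, if_neg h]
        omega

/-- size of the `l`-th run of `d` restricted to `[0, n)`. -/
def mrun (d : ℕ → Bool) (n : ℕ) (l : ℕ) : ℕ :=
  ((range n).filter (fun v => chg d v = l)).card

lemma sig_mrun (d : ℕ → Bool) (n l : ℕ) :
    sig (mrun d n) l = ((range n).filter (fun v => chg d v ≤ l)).card := by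
  unfold sig mrun
  rw [← card_biUnion]
  · congr 1
    ext v
    simp only [mem_biUnion, mem_Icc, mem_filter, mem_range]
    constructor
    · rintro ⟨i, ⟨hi1, hi2⟩, hv, hci⟩
      exact ⟨hv, by omega⟩
    · rintro ⟨hv, hc⟩
      exact ⟨chg d v, ⟨chg_pos d v, hc⟩, hv, rfl⟩
  · intro a ha b hb hab
    simp only [Function.onFun]
    rw [Finset.disjoint_left]
    intro x hx1 hx2
    rw [mem_filter] at hx1 hx2
    exact hab (hx1.2 ▸ hx2.2)

lemma sig_mrun_le_iff (d : ℕ → Bool) {n v : ℕ} (hv : v < n) (l : ℕ) :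
    sig (mrun d n) l ≤ v ↔ l < chg d v := by
  rw [sig_mrun]
  constructor
  · intro h
    by_contra hc
    push_neg at hc
    have hsub : range (v + 1) ⊆ (range n).filter (fun w => chg d w ≤ l) := by
      intro w hw
      rw [mem_range] at hw
      rw [mem_filter, mem_range]
      exact ⟨by omega, le_trans (chg_mono d (by omega)) hc⟩
    have := card_le_card hsub
    rw [card_range] at this
    omega
  · intro h
    have hsub : (range n).filter (fun w => chg d w ≤ l) ⊆ range v := by
      intro w hw
      rw [mem_filter, mem_range] at hw
      rw [mem_range]
      by_contra hc
      push_neg at hc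
      have := chg_mono d hc
      omega
    have := card_le_card hsub
    rw [card_range] at this
    omega

lemma sig_mrun_top (d : ℕ → Bool) {n : ℕ} (hn : 1 ≤ n) :
    sig (mrun d n) (chg d (n - 1)) = n := by
  rw [sig_mrun]
  have : (range n).filter (fun v => chg d v ≤ chg d (n - 1)) = range n := by
    apply filter_true_of_mem
    intro v hv
    rw [mem_range] at hv
    exact chg_mono d (by omega)
  rw [this, card_range]

lemma blk_mrun (d : ℕ → Bool) {n v : ℕ} (hv : v < n) :
    blk (chg d (n - 1)) (mrun d n) v = chg d v := by
  unfold blk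
  have h1 : (Icc 1 (chg d (n - 1))).filter (fun l => sig (mrun d n) l ≤ v) =
      Icc 1 (chg d v - 1) := by
    ext l
    rw [mem_filter, mem_Icc, mem_Icc]
    have hcv : chg d v ≤ chg d (n - 1) := chg_mono d (by omega)
    constructor
    · rintro ⟨⟨ha, hb⟩, hc⟩
      rw [sig_mrun_le_iff d hv] at hc
      omega
    · rintro ⟨ha, hb⟩
      refine ⟨⟨ha, by omega⟩, ?_⟩
      rw [sig_mrun_le_iff d hv]
      omega
  rw [h1, Nat.card_Icc]
  have := chg_pos d v
  omega

lemma mrun_pos (d : ℕ → Bool) {n l : ℕ} (hn : 1 ≤ n) (h1 : 1 ≤ l)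
    (h2 : l ≤ chg d (n - 1)) : 1 ≤ mrun d n l := by
  obtain ⟨w, hw1, hw2⟩ := exists_chg_eq d (n - 1) l h1 h2
  rw [mrun]
  exact Finset.card_pos.mpr ⟨w, by rw [mem_filter, mem_range]; exact ⟨by omega, hw2⟩⟩

lemma mrun_one (d : ℕ → Bool) {n : ℕ} (hn : 2 ≤ n) (h01 : d 1 = d 0) :
    2 ≤ mrun d n 1 := by
  have hc1 : chg d 1 = 1 := by
    rw [chg_succ, chg_zero, if_pos h01]
  have hsub : ({0, 1} : Finset ℕ) ⊆ (range n).filter (fun v => chg d v = 1) := by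
    intro w hw
    rw [mem_filter, mem_range]
    rcases Finset.mem_insert.mp hw with h | h
    · subst h; exact ⟨by omega, chg_zero d⟩
    · rw [Finset.mem_singleton] at h; subst h; exact ⟨by omega, hc1⟩
  have := card_le_card hsub
  rw [card_insert_of_notMem (by simp), card_singleton] at this
  exact this

lemma chg_parity_false {d : ℕ → Bool} (h0 : d 0 = false) (v : ℕ) :
    d v = true ↔ chg d v % 2 = 0 := by
  have h := chg_parity d v
  rw [h0] at h
  cases hv : d v <;> rw [hv] at h <;> simp at h <;> simp <;> omega

lemma chg_parity_true {d : ℕ → Bool} (h0 : d 0 = true) (v : ℕ) :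
    d v = true ↔ chg d v % 2 = 1 := by
  have h := chg_parity d v
  rw [h0] at h
  cases hv : d v <;> rw [hv] at h <;> simp at h <;> simp <;> omega

lemma gammaEven_adj {r : ℕ} {m : ℕ → ℕ} {a b : Fin (sig m r)} :
    (GammaEven r m).Adj a b ↔
      (a : ℕ) ≠ (b : ℕ) ∧ max (blk r m (a : ℕ)) (blk r m (b : ℕ)) % 2 = 0 := by
  show (a ≠ b ∧ _) ↔ _
  rw [Fin.ne_iff_vne]

lemma gammaOdd_adj {r : ℕ} {m : ℕ → ℕ} {a b : Fin (sig m r)} :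
    (GammaOdd r m).Adj a b ↔
      (a : ℕ) ≠ (b : ℕ) ∧ max (blk r m (a : ℕ)) (blk r m (b : ℕ)) % 2 = 1 := by
  show (a ≠ b ∧ _) ↔ _
  rw [Fin.ne_iff_vne]

lemma thGraph_adj' {n : ℕ} {d : ℕ → Bool} {u v : Fin n} :
    (ThGraph n d).Adj u v ↔ (u : ℕ) ≠ (v : ℕ) ∧ d (max (u : ℕ) (v : ℕ)) = true := by
  rw [thGraph_adj, Fin.ne_iff_vne]

lemma th_iso_gammaEven (d : ℕ → Bool) (n : ℕ) (hn : 1 ≤ n) (h0 : d 0 = false) :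
    Nonempty (ThGraph n d ≃g GammaEven (chg d (n - 1)) (mrun d n)) := by
  have hs : sig (mrun d n) (chg d (n - 1)) = n := sig_mrun_top d hn
  refine ⟨{ toEquiv := finCongr hs.symm, map_rel_iff' := ?_ }⟩
  intro u v
  rw [gammaEven_adj, thGraph_adj']
  have hu : ((finCongr hs.symm u : Fin _) : ℕ) = (u : ℕ) := rfl
  have hv : ((finCongr hs.symm v : Fin _) : ℕ) = (v : ℕ) := rfl
  rw [hu, hv, blk_mrun d u.isLt, blk_mrun d v.isLt,
    ← Monotone.map_max (chg_mono d), ← chg_parity_false h0]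

lemma th_iso_gammaOdd (d : ℕ → Bool) (n : ℕ) (hn : 1 ≤ n) (h0 : d 0 = true) :
    Nonempty (ThGraph n d ≃g GammaOdd (chg d (n - 1)) (mrun d n)) := by
  have hs : sig (mrun d n) (chg d (n - 1)) = n := sig_mrun_top d hn
  refine ⟨{ toEquiv := finCongr hs.symm, map_rel_iff' := ?_ }⟩
  intro u v
  rw [gammaOdd_adj, thGraph_adj']
  have hu : ((finCongr hs.symm u : Fin _) : ℕ) = (u : ℕ) := rfl
  have hv : ((finCongr hs.symm v : Fin _) : ℕ) = (v : ℕ) := rfl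
  rw [hu, hv, blk_mrun d u.isLt, blk_mrun d v.isLt,
    ← Monotone.map_max (chg_mono d), ← chg_parity_true h0]

lemma blk_mono (r : ℕ) (m : ℕ → ℕ) : Monotone (blk r m) := by
  intro a b hab
  unfold blk
  have : (Icc 1 r).filter (fun l => sig m l ≤ a) ⊆ (Icc 1 r).filter (fun l => sig m l ≤ b) := by
    intro l hl
    rw [mem_filter] at hl ⊢
    exact ⟨hl.1, by omega⟩
  have := card_le_card this
  omega

lemma gammaEven_eq_th (r : ℕ) (m : ℕ → ℕ) :
    GammaEven r m = ThGraph (sig m r) (fun v => decide (blk r m v % 2 = 0)) := by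
  ext u v
  rw [gammaEven_adj, thGraph_adj']
  rw [← Monotone.map_max (blk_mono r m)]
  simp

lemma gammaOdd_eq_th (r : ℕ) (m : ℕ → ℕ) :
    GammaOdd r m = ThGraph (sig m r) (fun v => decide (blk r m v % 2 = 1)) := by
  ext u v
  rw [gammaOdd_adj, thGraph_adj']
  rw [← Monotone.map_max (blk_mono r m)]
  simp

lemma exists_adj_of_walk {α : Type*} {G : SimpleGraph α} {u v : α} (w : G.Walk u v)
    (h : u ≠ v) : ∃ b, G.Adj u b := by
  cases w with
  | nil => exact absurd rfl h
  | cons ha p => exact ⟨_, ha⟩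
/-- A connected graph `G` on at least two vertices is a threshold graph
iff it is isomorphic to `Γ(m₁,…,m_{2k}) = ((((O_{m₁} ∨ K_{m₂}) ∪ O_{m₃}) ∨ K_{m₄})⋯) ∨ K_{m_{2k}}`
for some `k ≥ 1` and positive `m₁,…,m_{2k}` with `m₁ ≥ 2`, or to
`Γ(m₁,…,m_{2k+1}) = ((((K_{m₁} ∪ O_{m₂}) ∨ K_{m₃}) ∪ O_{m₄})⋯) ∨ K_{m_{2k+1}}`
for some `k ≥ 0` and positive `m₁,…,m_{2k+1}` with `m₁ ≥ 2`. -/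
theorem isThreshold_iff_gamma {V : Type} [Fintype V] (G : SimpleGraph V)
    (hconn : G.Connected) (hcard : 2 ≤ Fintype.card V) :
    IsThreshold G ↔
      ((∃ (k : ℕ) (m : ℕ → ℕ), 1 ≤ k ∧ (∀ i, 1 ≤ i → i ≤ 2 * k → 1 ≤ m i) ∧ 2 ≤ m 1 ∧
          Nonempty (G ≃g GammaEven (2 * k) m)) ∨
        (∃ (k : ℕ) (m : ℕ → ℕ), (∀ i, 1 ≤ i → i ≤ 2 * k + 1 → 1 ≤ m i) ∧ 2 ≤ m 1 ∧
          Nonempty (G ≃g GammaOdd (2 * k + 1) m))) := by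
  constructor
  · rintro ⟨W, H, hon, ⟨e0⟩⟩
    obtain ⟨n, d0, hn1, ⟨e1⟩⟩ := isThresholdOn_to_th hon
    have e : G ≃g ThGraph n d0 := e0.trans e1
    have hcardn : Fintype.card V = n := by
      rw [← Fintype.card_fin n]
      exact Fintype.card_congr e.toEquiv
    have hn2 : 2 ≤ n := hcardn ▸ hcard
    set d : ℕ → Bool := fun v => if v = 0 then d0 1 else d0 v with hdd
    have hth : ThGraph n d0 = ThGraph n d := by
      ext u v
      rw [thGraph_adj', thGraph_adj']
      constructor
      · rintro ⟨h1, h2⟩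
        refine ⟨h1, ?_⟩
        show (if max (u : ℕ) (v : ℕ) = 0 then d0 1 else d0 (max (u : ℕ) (v : ℕ))) = true
        rw [if_neg (by omega)]
        exact h2
      · rintro ⟨h1, h2⟩
        refine ⟨h1, ?_⟩
        have h2' : (if max (u : ℕ) (v : ℕ) = 0 then d0 1 else d0 (max (u : ℕ) (v : ℕ))) = true := h2
        rw [if_neg (by omega)] at h2'
        exact h2'
    have e2 : G ≃g ThGraph n d := hth ▸ e
    have h01 : d 1 = d 0 := by simp [hdd]
    have hconn' : (ThGraph n d).Connected := (e2.connected_iff).mp hconn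
    have hlast : d (n - 1) = true := by
      by_contra hc
      have hne : (⟨n - 1, by omega⟩ : Fin n) ≠ ⟨0, by omega⟩ := by
        intro h
        have := congrArg Fin.val h
        simp at this
        omega
      obtain ⟨w⟩ := hconn'.preconnected ⟨n - 1, by omega⟩ ⟨0, by omega⟩
      obtain ⟨b, ha⟩ := exists_adj_of_walk w hne
      obtain ⟨h1, h2⟩ := thGraph_adj'.mp ha
      have hb : (b : ℕ) < n := b.isLt
      have hmax : max ((⟨n - 1, by omega⟩ : Fin n) : ℕ) ((b : ℕ)) = n - 1 := by
        show max (n - 1) (b : ℕ) = n - 1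
        omega
      rw [hmax] at h2
      exact hc h2
    cases h0 : d 0 with
    | false =>
      left
      have hpar : chg d (n - 1) % 2 = 0 := (chg_parity_false h0 (n - 1)).mp hlast
      have hr1 : 1 ≤ chg d (n - 1) := chg_pos d (n - 1)
      refine ⟨chg d (n - 1) / 2, mrun d n, by omega, ?_, mrun_one d hn2 h01, ?_⟩
      · intro i hi1 hi2
        exact mrun_pos d (by omega) hi1 (by omega)
      · have hreq : 2 * (chg d (n - 1) / 2) = chg d (n - 1) := by omega
        rw [hreq]
        obtain ⟨e3⟩ := th_iso_gammaEven d n (by omega) h0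
        exact ⟨e2.trans e3⟩
    | true =>
      right
      have hpar : chg d (n - 1) % 2 = 1 := (chg_parity_true h0 (n - 1)).mp hlast
      refine ⟨chg d (n - 1) / 2, mrun d n, ?_, mrun_one d hn2 h01, ?_⟩
      · intro i hi1 hi2
        exact mrun_pos d (by omega) hi1 (by omega)
      · have hreq : 2 * (chg d (n - 1) / 2) + 1 = chg d (n - 1) := by omega
        rw [hreq]
        obtain ⟨e3⟩ := th_iso_gammaOdd d n (by omega) h0
        exact ⟨e2.trans e3⟩
  · rintro (⟨k, m, hk, hm, hm1, ⟨e⟩⟩ | ⟨k, m, hm, hm1, ⟨e⟩⟩)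
    · refine isThreshold_of_iso e ?_
      rw [gammaEven_eq_th]
      apply thGraph_isThreshold
      have : m 1 ≤ sig m (2 * k) :=
        Finset.single_le_sum (fun i _ => Nat.zero_le (m i)) (by rw [mem_Icc]; omega)
      omega
    · refine isThreshold_of_iso e ?_
      rw [gammaOdd_eq_th]
      apply thGraph_isThreshold
      have : m 1 ≤ sig m (2 * k + 1) :=
        Finset.single_le_sum (fun i _ => Nat.zero_le (m i)) (by rw [mem_Icc]; omega)
      omega
end

section
/- Let n = 4m with m ≥ 1, let i and j be two distinct vertices of the complete graph K_n, and let K_n⁻ = K_n − {i,j} be the graph obtained by deleting the edge {i,j}. Then p_{K_n⁻}(i,j,π/2) = 1, and moreover p_{K_n⁻}(k,l,π/2) = 0 for every pair of distinct vertices k, l with k,l ∉ {i,j}. -/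
open Finset
set_option maxHeartbeats 1000000 in

lemma exp_smul_idem {n : ℕ} (A : Matrix (Fin n) (Fin n) ℂ) (h : A * A = A) (w : ℂ) :
    NormedSpace.exp (w • A) = 1 + (Complex.exp w - 1) • A := by
  letI : SeminormedRing (Matrix (Fin n) (Fin n) ℂ) := Matrix.linftyOpSemiNormedRing
  letI : NormedRing (Matrix (Fin n) (Fin n) ℂ) := Matrix.linftyOpNormedRing
  letI : NormedAlgebra ℂ (Matrix (Fin n) (Fin n) ℂ) := Matrix.linftyOpNormedAlgebra
  have hpow : ∀ k : ℕ, A ^ (k + 1) = A := by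
    intro k
    induction k with
    | zero => simp
    | succ k ih => rw [pow_succ, ih, h]
  have hsum : Summable fun k : ℕ => ((k.factorial : ℂ))⁻¹ • (w • A) ^ k :=
    NormedSpace.expSeries_summable' (w • A)
  simp only [NormedSpace.exp_eq_tsum ℂ]
  rw [Summable.tsum_eq_zero_add hsum]
  simp only [pow_zero, Nat.factorial_zero, Nat.cast_one, inv_one, one_smul]
  congr 1
  have hterm : ∀ k : ℕ, (((k + 1).factorial : ℂ))⁻¹ • (w • A) ^ (k + 1)
      = (w ^ (k + 1) / ((k + 1).factorial : ℂ)) • A := by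
    intro k
    rw [smul_pow, hpow, smul_smul, div_eq_mul_inv, mul_comm]
  simp_rw [hterm]
  have hsum2 : Summable fun k : ℕ => w ^ k / (k.factorial : ℂ) :=
    NormedSpace.expSeries_div_summable w
  have hsum3 : Summable fun k : ℕ => w ^ (k + 1) / ((k + 1).factorial : ℂ) :=
    (summable_nat_add_iff 1).2 hsum2
  rw [Summable.tsum_smul_const hsum3 A]
  congr 1
  have hexp : Complex.exp w = ∑' k : ℕ, w ^ k / (k.factorial : ℂ) := by
    rw [Complex.exp_eq_exp_ℂ, NormedSpace.exp_eq_tsum_div]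
  rw [Summable.tsum_eq_zero_add hsum2] at hexp
  simp only [pow_zero, Nat.factorial_zero, Nat.cast_one, div_one] at hexp
  rw [hexp]
  ring

lemma exp_smul_sq {n : ℕ} (A : Matrix (Fin n) (Fin n) ℂ) (s : ℂ) (hs : s ≠ 0)
    (h : A * A = s • A) (w : ℂ) :
    NormedSpace.exp (w • A) = 1 + ((Complex.exp (w * s) - 1) / s) • A := by
  have hP : (s⁻¹ • A) * (s⁻¹ • A) = s⁻¹ • A := by
    rw [smul_mul_smul_comm, h, smul_smul]
    congr 1
    field_simp
  have hwA : w • A = (w * s) • (s⁻¹ • A) := by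
    rw [smul_smul]
    congr 1
    field_simp
  rw [hwA, exp_smul_idem _ hP, smul_smul, div_eq_mul_inv]


/-- `U_t = exp(−itL)`, where `L` is the Laplacian matrix of `G` (diagonal entries the
degrees, entry `−1` for each edge, `0` otherwise). -/
noncomputable def Ut {n : ℕ} (G : SimpleGraph (Fin n)) [DecidableRel G.Adj] (t : ℝ) :
    Matrix (Fin n) (Fin n) ℂ :=
  NormedSpace.exp ((-(Complex.I * (t : ℂ))) • G.lapMatrix ℂ)

/-- The transfer probability `p_G(i,j,t) = |(U_t)_{j,i}|²`. -/
noncomputable def transferProb {n : ℕ} (G : SimpleGraph (Fin n)) [DecidableRel G.Adj]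
    (i j : Fin n) (t : ℝ) : ℝ :=
  ‖Ut G t j i‖ ^ 2

/-- `K_n − {i,j}`: the complete graph on `Fin n` with the single edge `{i,j}` removed. -/
def KnMinusEdge (n : ℕ) (i j : Fin n) : SimpleGraph (Fin n) where
  Adj u v := u ≠ v ∧ s(u, v) ≠ s(i, j)
  symm := ⟨by
    intro u v h
    exact ⟨h.1.symm, by rw [Sym2.eq_swap]; exact h.2⟩⟩
  loopless := ⟨by intro u h; exact h.1 rfl⟩

instance (n : ℕ) (i j : Fin n) : DecidableRel (KnMinusEdge n i j).Adj := fun u v =>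
  decidable_of_iff (u ≠ v ∧ s(u, v) ≠ s(i, j)) Iff.rfl

/-- Let `n = 4m`, `m ≥ 1`, and let `K_n⁻ = K_n − {i,j}` for distinct
vertices `i, j`.  Then `p_{K_n⁻}(i,j,π/2) = 1`, and `p_{K_n⁻}(k,l,π/2) = 0` for all
distinct `k, l ∉ {i,j}`. -/
theorem transferProb_knMinusEdge (m n : ℕ) (hm : 1 ≤ m) (hn : n = 4 * m)
    (i j : Fin n) (hij : i ≠ j) :
    transferProb (KnMinusEdge n i j) i j (Real.pi / 2) = 1 ∧
      ∀ k l : Fin n, k ≠ l → k ≠ i → k ≠ j → l ≠ i → l ≠ j →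
        transferProb (KnMinusEdge n i j) k l (Real.pi / 2) = 0 := by
    classical
  have hn4 : 4 ≤ n := by omega
  have hn0 : (n : ℂ) ≠ 0 := Nat.cast_ne_zero.2 (by omega)
  set v : Fin n → ℂ := fun u => if u = i then 1 else if u = j then -1 else 0 with hv
  set Q : Matrix (Fin n) (Fin n) ℂ := Matrix.vecMulVec v v with hQdef
  set J : Matrix (Fin n) (Fin n) ℂ := Matrix.of (fun _ _ => 1) with hJdef
  have hAdj : ∀ u w : Fin n, (KnMinusEdge n i j).Adj u w ↔
      (u ≠ w ∧ ¬(u = i ∧ w = j ∨ u = j ∧ w = i)) := by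
    intro u w
    constructor
    · rintro ⟨h1, h2⟩
      exact ⟨h1, fun hc => h2 (Sym2.eq_iff.2 hc)⟩
    · rintro ⟨h1, h2⟩
      exact ⟨h1, fun hc => h2 (Sym2.eq_iff.1 hc)⟩
  -- degrees
  have hdegi : (KnMinusEdge n i j).degree i = n - 2 := by
    have he : (KnMinusEdge n i j).neighborFinset i = (univ.erase i).erase j := by
      ext w
      simp only [SimpleGraph.mem_neighborFinset, hAdj, Finset.mem_erase, Finset.mem_univ,
        and_true]
      aesop
    rw [SimpleGraph.degree, he, Finset.card_erase_of_mem (by simp [hij.symm]),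
      Finset.card_erase_of_mem (Finset.mem_univ i), Finset.card_univ, Fintype.card_fin]
    omega
  have hdegj : (KnMinusEdge n i j).degree j = n - 2 := by
    have he : (KnMinusEdge n i j).neighborFinset j = (univ.erase j).erase i := by
      ext w
      simp only [SimpleGraph.mem_neighborFinset, hAdj, Finset.mem_erase, Finset.mem_univ,
        and_true]
      aesop
    rw [SimpleGraph.degree, he, Finset.card_erase_of_mem (by simp [hij]),
      Finset.card_erase_of_mem (Finset.mem_univ j), Finset.card_univ, Fintype.card_fin]
    omega
  have hdegk : ∀ u : Fin n, u ≠ i → u ≠ j → (KnMinusEdge n i j).degree u = n - 1 := by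
    intro u hui huj
    have he : (KnMinusEdge n i j).neighborFinset u = univ.erase u := by
      ext w
      simp only [SimpleGraph.mem_neighborFinset, hAdj, Finset.mem_erase, Finset.mem_univ,
        and_true]
      constructor
      · rintro ⟨h1, -⟩
        exact fun hc => h1 hc.symm
      · intro h1
        refine ⟨fun hc => h1 hc.symm, ?_⟩
        rintro (⟨hc, -⟩ | ⟨hc, -⟩)
        · exact hui hc
        · exact huj hc
    rw [SimpleGraph.degree, he, Finset.card_erase_of_mem (Finset.mem_univ u),
      Finset.card_univ, Fintype.card_fin]
  -- Laplacian decomposition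
  have hQapp : ∀ u w : Fin n, Q u w = v u * v w := fun u w => rfl
  have hvapp : ∀ u : Fin n, v u = if u = i then 1 else if u = j then -1 else 0 :=
    fun u => rfl
  have hcast2 : ((n - 2 : ℕ) : ℂ) = (n : ℂ) - 2 := by
    rw [Nat.cast_sub (by omega)]; norm_num
  have hcast1 : ((n - 1 : ℕ) : ℂ) = (n : ℂ) - 1 := by
    rw [Nat.cast_sub (by omega)]; norm_num
  have hL : (KnMinusEdge n i j).lapMatrix ℂ = (n : ℂ) • 1 - J - Q := by
    ext u w
    simp only [SimpleGraph.lapMatrix, Matrix.sub_apply, SimpleGraph.degMatrix,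
      Matrix.diagonal_apply, SimpleGraph.adjMatrix_apply, Matrix.smul_apply,
      Matrix.one_apply, hJdef, Matrix.of_apply, hQapp, hvapp, smul_eq_mul]
    by_cases huw : u = w
    · subst huw
      rw [if_pos rfl, if_pos rfl, if_neg (SimpleGraph.irrefl _)]
      by_cases hui : u = i
      · subst hui
        rw [hdegi, hcast2]
        simp [hij]
        ring
      · by_cases huj : u = j
        · subst huj
          rw [hdegj, hcast2]
          simp [hui]
          ring
        · rw [hdegk u hui huj, hcast1]
          simp [hui, huj]
    · rw [if_neg huw, if_neg huw]
      by_cases hedge : (u = i ∧ w = j) ∨ (u = j ∧ w = i)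
      · have hadj : ¬ (KnMinusEdge n i j).Adj u w := by
          rw [hAdj]; tauto
        rw [if_neg hadj]
        rcases hedge with ⟨h1, h2⟩ | ⟨h1, h2⟩ <;> subst h1 <;> subst h2 <;>
          simp [hij, hij.symm]
      · have hadj : (KnMinusEdge n i j).Adj u w := by
          rw [hAdj]; exact ⟨huw, hedge⟩
        rw [if_pos hadj]
        push_neg at hedge
        have hz : (if u = i then (1:ℂ) else if u = j then -1 else 0) *
            (if w = i then (1:ℂ) else if w = j then -1 else 0) = 0 := by
          by_cases hui : u = i
          · have hwi : ¬ w = i := fun hc => huw (hui.trans hc.symm)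
            have hwj : ¬ w = j := hedge.1 hui
            rw [if_neg hwi, if_neg hwj, mul_zero]
          · by_cases huj : u = j
            · have hwj : ¬ w = j := fun hc => huw (huj.trans hc.symm)
              have hwi : ¬ w = i := hedge.2 huj
              rw [if_neg hwi, if_neg hwj, mul_zero]
            · rw [if_neg hui, if_neg huj, zero_mul]
        rw [hz]
        ring
    -- sum identities
  have hsplit : ∀ x : Fin n, v x = (if x = i then (1:ℂ) else 0) + (if x = j then (-1:ℂ) else 0) := by
    intro x
    rw [hvapp]
    by_cases h1 : x = i
    · subst h1; simp [hij]
    · by_cases h2 : x = j <;> simp [h1, h2, hij.symm]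
  have hsv : ∑ x : Fin n, v x = 0 := by
    simp [hsplit, Finset.sum_add_distrib]
  have hvv : ∑ x : Fin n, v x * v x = 2 := by
    have : ∀ x : Fin n, v x * v x = (if x = i then (1:ℂ) else 0) + (if x = j then (1:ℂ) else 0) := by
      intro x
      rw [hvapp]
      by_cases h1 : x = i
      · subst h1; simp [hij]
      · by_cases h2 : x = j <;> simp [h1, h2, hij.symm]
    rw [Finset.sum_congr rfl fun x _ => this x]
    simp [Finset.sum_add_distrib]
    norm_num
  have hJJ : J * J = (n : ℂ) • J := by
    ext u w
    simp [hJdef, Matrix.mul_apply]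
  have hJQ : J * Q = 0 := by
    ext u w
    simp only [Matrix.mul_apply, hJdef, Matrix.of_apply, hQapp, one_mul, Matrix.zero_apply,
      ← Finset.sum_mul, hsv, zero_mul]
  have hQJ : Q * J = 0 := by
    ext u w
    simp only [Matrix.mul_apply, hJdef, Matrix.of_apply, hQapp, mul_one, Matrix.zero_apply,
      ← Finset.mul_sum, hsv, mul_zero]
  have hQQ : Q * Q = (2 : ℂ) • Q := by
    ext u w
    simp only [Matrix.mul_apply, hQapp, Matrix.smul_apply, smul_eq_mul]
    calc ∑ x : Fin n, v u * v x * (v x * v w)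
        = v u * v w * ∑ x : Fin n, v x * v x := by
          rw [Finset.mul_sum]
          exact Finset.sum_congr rfl fun x _ => by ring
      _ = 2 * (v u * v w) := by rw [hvv]; ring
  -- the exponential
  set z : ℂ := -(Complex.I * ((Real.pi / 2 : ℝ) : ℂ)) with hz
  have hzn : Complex.exp (z * n) = 1 := by
    have h : z * n = (-(m : ℤ)) * (2 * (Real.pi : ℂ) * Complex.I) := by
      rw [hz, hn]; push_cast; ring
    rw [h]
    exact_mod_cast Complex.exp_int_mul_two_pi_mul_I (-(m : ℤ))
  have hzn' : Complex.exp (-z * n) = 1 := by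
    have h : -z * n = ((m : ℤ)) * (2 * (Real.pi : ℂ) * Complex.I) := by
      rw [hz, hn]; push_cast; ring
    rw [h]
    exact_mod_cast Complex.exp_int_mul_two_pi_mul_I (m : ℤ)
  have hz2 : Complex.exp (-z * 2) = -1 := by
    have h : -z * 2 = (Real.pi : ℂ) * Complex.I := by
      rw [hz]; push_cast; ring
    rw [h]
    exact_mod_cast Complex.exp_pi_mul_I
  have hdecomp : z • (KnMinusEdge n i j).lapMatrix ℂ
      = ((z * (n : ℂ)) • (1 : Matrix (Fin n) (Fin n) ℂ) + (-z) • J) + (-z) • Q := by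
    rw [hL]
    module
  have hc1 : Commute ((z * (n : ℂ)) • (1 : Matrix (Fin n) (Fin n) ℂ) + (-z) • J) ((-z) • Q) := by
    show _ * _ = _ * _
    simp only [Matrix.add_mul, Matrix.mul_add, Matrix.smul_mul, Matrix.mul_smul,
      Matrix.one_mul, Matrix.mul_one, hJQ, hQJ, smul_smul, smul_zero, add_zero, zero_add,
      mul_comm]
  have hc2 : Commute ((z * (n : ℂ)) • (1 : Matrix (Fin n) (Fin n) ℂ)) ((-z) • J) := by
    show _ * _ = _ * _
    simp only [Matrix.smul_mul, Matrix.mul_smul, Matrix.one_mul, Matrix.mul_one, smul_smul,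
      mul_comm]
  have hU : Ut (KnMinusEdge n i j) (Real.pi / 2) = 1 - Q := by
    have hdef : Ut (KnMinusEdge n i j) (Real.pi / 2)
        = NormedSpace.exp (z • (KnMinusEdge n i j).lapMatrix ℂ) := rfl
    rw [hdef, hdecomp, Matrix.exp_add_of_commute _ _ hc1,
      Matrix.exp_add_of_commute _ _ hc2,
      exp_smul_idem (1 : Matrix (Fin n) (Fin n) ℂ) (one_mul 1) (z * (n : ℂ)),
      exp_smul_sq J (n : ℂ) hn0 hJJ (-z),
      exp_smul_sq Q 2 two_ne_zero hQQ (-z),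
      hzn, hzn', hz2]
    have h2 : ((-1 : ℂ) - 1) / 2 = -1 := by norm_num
    rw [h2]
    rw [sub_self, zero_smul, add_zero, zero_div, zero_smul, add_zero, one_mul, one_mul,
      neg_smul, one_smul, ← sub_eq_add_neg]
  have h1Q : ∀ a b : Fin n, ((1 : Matrix (Fin n) (Fin n) ℂ) - Q) a b
      = (if a = b then 1 else 0) - v a * v b := by
    intro a b
    simp [Matrix.sub_apply, Matrix.one_apply, hQapp]
  constructor
  · show ‖Ut (KnMinusEdge n i j) (Real.pi / 2) j i‖ ^ 2 = 1
    rw [hU, h1Q, hvapp i, hvapp j]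
    simp [hij, hij.symm]
  · intro k l hkl hki hkj hli hlj
    show ‖Ut (KnMinusEdge n i j) (Real.pi / 2) l k‖ ^ 2 = 0
    rw [hU, h1Q, hvapp l, hvapp k]
    simp [hki, hkj, hli, hlj]
    exact fun h => hkl h.symm
end

section
/- Let n = 4m with m ≥ 1, let M be a matching in the complete graph K_n (a set of pairwise vertex-disjoint edges) of size k ≤ 2m, and let G = K_n − M be the graph obtained by deleting all edges of M. Then for every edge {i,j} ∈ M one has p_G(i,j,π/2) = 1. -/
open Finset

/-- `K_n − M`: the complete graph on `Fin n` with the edges of `M` removed. -/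
def KnMinusSet (n : ℕ) (M : Finset (Sym2 (Fin n))) : SimpleGraph (Fin n) where
  Adj u v := u ≠ v ∧ s(u, v) ∉ M
  symm := by
    refine ⟨?_⟩
    intro u v h
    exact ⟨h.1.symm, by rw [Sym2.eq_swap]; exact h.2⟩
  loopless := by refine ⟨?_⟩; intro u h; exact h.1 rfl

instance (n : ℕ) (M : Finset (Sym2 (Fin n))) : DecidableRel (KnMinusSet n M).Adj :=
  fun u v => decidable_of_iff (u ≠ v ∧ s(u, v) ∉ M) Iff.rfl

open Nat NormedSpace in
lemma exp_smul_idem_s4 {𝔸 : Type*} [NormedRing 𝔸] [NormedAlgebra ℂ 𝔸] [CompleteSpace 𝔸]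
    (c : ℂ) (p : 𝔸) (hp : p * p = p) :
    exp (c • p) = 1 + (Complex.exp c - 1) • p := by
  have hpow : ∀ k : ℕ, p ^ (k + 1) = p := by
    intro k; induction k with
    | zero => simp
    | succ k ih => rw [pow_succ, ih, hp]
  have hsum : Summable fun k : ℕ => (k !⁻¹ : ℂ) • (c • p) ^ k :=
    expSeries_summable' (𝕂 := ℂ) (c • p)
  have hg : Summable fun k : ℕ => ((k + 1)!⁻¹ : ℂ) * c ^ (k + 1) := by
    have h0 : Summable fun k : ℕ => (k !⁻¹ : ℂ) * c ^ k := by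
      simpa [smul_eq_mul] using expSeries_summable' (𝕂 := ℂ) (𝔸 := ℂ) c
    exact h0.comp_injective (add_left_injective 1)
  have hgsum : ∑' k : ℕ, ((k + 1)!⁻¹ : ℂ) * c ^ (k + 1) = Complex.exp c - 1 := by
    have h0 : Summable fun k : ℕ => (k !⁻¹ : ℂ) * c ^ k := by
      simpa [smul_eq_mul] using expSeries_summable' (𝕂 := ℂ) (𝔸 := ℂ) c
    have := Summable.tsum_eq_zero_add h0
    have hexp : Complex.exp c = ∑' k : ℕ, (k !⁻¹ : ℂ) * c ^ k := by
      rw [Complex.exp_eq_exp_ℂ, exp_eq_tsum ℂ]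
      simp [smul_eq_mul]
    rw [hexp, this]
    simp
  rw [exp_eq_tsum ℂ]; beta_reduce; rw [Summable.tsum_eq_zero_add hsum]
  have hterm : ∀ k : ℕ, ((k+1)!⁻¹ : ℂ) • (c • p) ^ (k+1) = (((k+1)!⁻¹ : ℂ) * c ^ (k+1)) • p := by
    intro k
    rw [smul_pow, hpow, smul_smul]
  simp_rw [hterm]
  rw [Summable.tsum_smul_const hg, hgsum]
  simp

lemma matrix_exp_smul_idem {N : ℕ} (c : ℂ) (p : Matrix (Fin N) (Fin N) ℂ) (hp : p * p = p) :
    NormedSpace.exp (c • p) = 1 + (Complex.exp c - 1) • p := by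
  letI : SeminormedRing (Matrix (Fin N) (Fin N) ℂ) := Matrix.linftyOpSemiNormedRing
  letI : NormedRing (Matrix (Fin N) (Fin N) ℂ) := Matrix.linftyOpNormedRing
  letI : NormedAlgebra ℂ (Matrix (Fin N) (Fin N) ℂ) := Matrix.linftyOpNormedAlgebra
  exact exp_smul_idem_s4 c p hp


open Nat in
theorem knMinus_exp_entry (m n : ℕ) (hm : 1 ≤ m) (hn : n = 4 * m)
    (M : Finset (Sym2 (Fin n)))
    (hloop : ∀ e ∈ M, ¬ e.IsDiag)
    (hdisj : ∀ e ∈ M, ∀ f ∈ M, e ≠ f → ∀ v : Fin n, v ∈ e → v ∉ f) :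
    ∀ i j : Fin n, s(i, j) ∈ M →
      NormedSpace.exp ((-(Complex.I * ((Real.pi/2 : ℝ) : ℂ)))
          • (KnMinusSet n M).lapMatrix ℂ) j i = 1 := by
  classical
  intro i j hij
  set G := KnMinusSet n M with hG
  -- basic facts
  have hnd : ∀ u v : Fin n, s(u,v) ∈ M → u ≠ v := by
    intro u v h hc
    exact hloop _ h (by rw [hc]; exact Sym2.mk_isDiag_iff.mpr rfl)
  have huniq : ∀ u v w : Fin n, s(u,v) ∈ M → s(u,w) ∈ M → v = w := by
    intro u v w h1 h2
    by_contra hvw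
    have hne : s(u,v) ≠ s(u,w) := fun h => hvw (Sym2.congr_right.mp h)
    exact hdisj _ h1 _ h2 hne u (Sym2.mem_mk_left u v) (Sym2.mem_mk_left u w)
  -- the matrix B = Laplacian of the matching
  set B : Matrix (Fin n) (Fin n) ℂ := Matrix.of (fun u v =>
    if u = v then (if ∃ w, s(u,w) ∈ M then (1:ℂ) else 0)
    else (if s(u,v) ∈ M then -1 else 0)) with hB
  have hrowm : ∀ u w : Fin n, s(u,w) ∈ M → ∀ k,
      B u k = (if k = u then 1 else 0) - (if k = w then 1 else 0) := by
    intro u w huw k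
    have huw' : u ≠ w := hnd u w huw
    by_cases hk : k = u
    · subst hk
      simp only [hB, Matrix.of_apply, if_pos rfl, if_pos (⟨w, huw⟩ : ∃ w, s(k,w) ∈ M),
        if_neg (huw' : ¬ k = w)]
      norm_num
    · by_cases hk2 : k = w
      · subst hk2
        simp only [hB, Matrix.of_apply, if_neg (Ne.symm hk : ¬ u = k), if_pos huw,
          if_neg hk, if_pos rfl]
        norm_num
      · have hnm : s(u,k) ∉ M := fun h => hk2 (huniq u k w h huw)
        simp only [hB, Matrix.of_apply, if_neg (fun h : u = k => hk h.symm), if_neg hnm,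
          if_neg hk, if_neg hk2]
        norm_num
  have hrow0 : ∀ u : Fin n, (¬ ∃ w, s(u,w) ∈ M) → ∀ k, B u k = 0 := by
    intro u hu k
    by_cases hk : u = k
    · simp only [hB, Matrix.of_apply, if_pos hk, if_neg hu]
    · have : s(u,k) ∉ M := fun h => hu ⟨k, h⟩
      simp only [hB, Matrix.of_apply, if_neg hk, if_neg this]
  have hBsymmE : ∀ u v : Fin n, B u v = B v u := by
    intro u v
    by_cases h : u = v
    · subst h; rfl
    · simp only [hB, Matrix.of_apply, if_neg h, if_neg (Ne.symm h : ¬ v = u), Sym2.eq_swap]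
  have hrowsum : ∀ u : Fin n, ∑ k, B u k = 0 := by
    intro u
    by_cases h : ∃ w, s(u,w) ∈ M
    · obtain ⟨w, hw⟩ := h
      rw [Finset.sum_congr rfl (fun k _ => hrowm u w hw k)]
      simp [Finset.sum_sub_distrib]
    · rw [Finset.sum_congr rfl (fun k _ => hrow0 u h k)]
      simp
  have hcolsum : ∀ v : Fin n, ∑ k, B k v = 0 := by
    intro v
    rw [Finset.sum_congr rfl (fun k _ => hBsymmE k v)]
    exact hrowsum v
  set Jmat : Matrix (Fin n) (Fin n) ℂ := Matrix.of (fun _ _ => (1:ℂ)) with hJ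
  have hn0 : (n:ℂ) ≠ 0 := by
    have : 0 < n := by omega
    exact_mod_cast Nat.cast_ne_zero.mpr (by omega)
  have hJJ : Jmat * Jmat = (n:ℂ) • Jmat := by
    ext u v
    simp [hJ, Matrix.mul_apply, Finset.card_univ]
  have hJB : Jmat * B = 0 := by
    ext u v
    rw [Matrix.mul_apply]
    simp only [hJ, Matrix.of_apply, one_mul, Matrix.zero_apply]
    exact hcolsum v
  have hBJ : B * Jmat = 0 := by
    ext u v
    rw [Matrix.mul_apply]
    simp only [hJ, Matrix.of_apply, mul_one, Matrix.zero_apply]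
    exact hrowsum u
  have hBB : B * B = (2:ℂ) • B := by
    ext u v
    rw [Matrix.mul_apply, Matrix.smul_apply, smul_eq_mul]
    by_cases h : ∃ w, s(u,w) ∈ M
    · obtain ⟨w, hw⟩ := h
      have hwu : s(w,u) ∈ M := by rw [Sym2.eq_swap]; exact hw
      have huw' : u ≠ w := hnd u w hw
      rw [Finset.sum_congr rfl (fun k _ => by rw [hrowm u w hw k])]
      have hcollapse : ∑ k, ((if k = u then (1:ℂ) else 0) - (if k = w then 1 else 0)) * B k v
          = B u v - B w v := by
        simp [sub_mul, Finset.sum_sub_distrib, ite_mul]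
      rw [hcollapse, hrowm u w hw v, hrowm w u hwu v]
      ring
    · rw [Finset.sum_congr rfl (fun k _ => by rw [hrow0 u h k, zero_mul])]
      rw [hrow0 u h v]
      simp
  -- degrees
  have hAdj : ∀ u v : Fin n, G.Adj u v ↔ (u ≠ v ∧ s(u,v) ∉ M) := by
    intro u v; rfl
  have hdegm : ∀ u w : Fin n, s(u,w) ∈ M → G.degree u = n - 2 := by
    intro u w hw
    have huw' : u ≠ w := hnd u w hw
    have h1 : G.degree u = (Finset.filter (G.Adj u) Finset.univ).card := by
      rw [← SimpleGraph.neighborFinset_eq_filter]; rfl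
    have hset : Finset.filter (G.Adj u) Finset.univ = (Finset.univ : Finset (Fin n)) \ {u, w} := by
      ext v
      simp only [Finset.mem_filter, Finset.mem_univ, true_and, Finset.mem_sdiff,
        Finset.mem_insert, Finset.mem_singleton, hAdj]
      constructor
      · rintro ⟨hne, hnm⟩
        push_neg
        exact ⟨fun h => hne h.symm, fun h => hnm (h ▸ hw)⟩
      · intro hv
        push_neg at hv
        exact ⟨fun h => hv.1 h.symm, fun hm => hv.2 (huniq u v w hm hw)⟩
    rw [h1, hset, Finset.card_sdiff_of_subset (Finset.subset_univ _), Finset.card_univ,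
      Fintype.card_fin]
    congr 1
    rw [Finset.card_insert_of_notMem (by simpa using huw'), Finset.card_singleton]
  have hdegu : ∀ u : Fin n, (¬ ∃ w, s(u,w) ∈ M) → G.degree u = n - 1 := by
    intro u hu
    have h1 : G.degree u = (Finset.filter (G.Adj u) Finset.univ).card := by
      rw [← SimpleGraph.neighborFinset_eq_filter]; rfl
    have hset : Finset.filter (G.Adj u) Finset.univ = (Finset.univ : Finset (Fin n)) \ {u} := by
      ext v
      simp only [Finset.mem_filter, Finset.mem_univ, true_and, Finset.mem_sdiff,
        Finset.mem_singleton, hAdj]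
      constructor
      · rintro ⟨hne, _⟩
        exact fun h => hne h.symm
      · intro hv
        exact ⟨fun h => hv h.symm, fun hm => hu ⟨v, hm⟩⟩
    rw [h1, hset, Finset.card_sdiff_of_subset (Finset.subset_univ _), Finset.card_univ,
      Fintype.card_fin, Finset.card_singleton]
  have h4n : 4 ≤ n := by omega
  -- the Laplacian identity
  have hLap : G.lapMatrix ℂ = (n:ℂ) • (1 : Matrix (Fin n) (Fin n) ℂ) - Jmat - B := by
    ext u v
    simp only [SimpleGraph.lapMatrix, Matrix.sub_apply, SimpleGraph.degMatrix,
      SimpleGraph.adjMatrix_apply, Matrix.smul_apply, Matrix.one_apply, hJ, Matrix.of_apply,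
      Matrix.diagonal_apply, smul_eq_mul]
    by_cases huv : u = v
    · subst huv
      have hA : ¬ G.Adj u u := G.loopless.irrefl u
      rw [if_pos rfl, if_pos rfl, if_neg hA]
      by_cases h : ∃ w, s(u,w) ∈ M
      · obtain ⟨w, hw⟩ := h
        rw [hdegm u w hw]
        have hBuu : B u u = 1 := by
          have hex : ∃ x, s(u,x) ∈ M := ⟨w, hw⟩
          simp [hB, hex]
        rw [hBuu]
        have : ((n - 2 : ℕ) : ℂ) = (n : ℂ) - 2 := by
          push_cast [Nat.cast_sub (by omega : 2 ≤ n)]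
          ring
        rw [this]
        ring
      · rw [hdegu u h]
        have hBuu : B u u = 0 := hrow0 u h u
        rw [hBuu]
        have : ((n - 1 : ℕ) : ℂ) = (n : ℂ) - 1 := by
          push_cast [Nat.cast_sub (by omega : 1 ≤ n)]
          ring
        rw [this]
        ring
    · rw [if_neg huv, if_neg huv]
      by_cases hm' : s(u,v) ∈ M
      · have hBuv : B u v = -1 := by
          simp only [hB, Matrix.of_apply, if_neg huv]
          rw [if_pos hm']
        have hA : ¬ G.Adj u v := by
          rw [hAdj]
          push_neg
          intro _; exact hm'
        rw [if_neg hA, hBuv]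
        ring
      · have hBuv : B u v = 0 := by
          simp only [hB, Matrix.of_apply, if_neg huv]
          rw [if_neg hm']
        have hA : G.Adj u v := by
          rw [hAdj]; exact ⟨huv, hm'⟩
        rw [if_pos hA, hBuv]
        ring
  -- the exponential computation
  set t : ℂ := Complex.I * ((Real.pi/2 : ℝ) : ℂ) with ht
  have hdecomp : (-t) • G.lapMatrix ℂ
      = ((-t) * n) • (1 : Matrix (Fin n) (Fin n) ℂ) + (t • Jmat + t • B) := by
    rw [hLap]
    module
  have hcJB : Commute Jmat B := by
    show Jmat * B = B * Jmat
    rw [hJB, hBJ]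
  have hc1 : Commute (((-t) * n) • (1 : Matrix (Fin n) (Fin n) ℂ)) (t • Jmat + t • B) :=
    (Commute.one_left _).smul_left _
  have hc2 : Commute (t • Jmat) (t • B) := (hcJB.smul_left t).smul_right t
  have hE1 : NormedSpace.exp (((-t) * n) • (1 : Matrix (Fin n) (Fin n) ℂ)) = 1 := by
    rw [matrix_exp_smul_idem _ _ (one_mul 1)]
    have hval : (-t) * n = (Int.cast (-(m:ℤ)) : ℂ) * (2 * Real.pi * Complex.I) := by
      rw [ht, hn]
      push_cast
      ring
    rw [hval, Complex.exp_int_mul_two_pi_mul_I]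
    simp
  have hE2 : NormedSpace.exp (t • Jmat) = 1 := by
    have hP : ((n:ℂ)⁻¹ • Jmat) * ((n:ℂ)⁻¹ • Jmat) = (n:ℂ)⁻¹ • Jmat := by
      rw [Matrix.smul_mul, Matrix.mul_smul, hJJ, smul_smul, smul_smul]
      congr 1
      field_simp
    have hsplit : t • Jmat = (t * n) • ((n:ℂ)⁻¹ • Jmat) := by
      rw [smul_smul]
      congr 1
      field_simp
    rw [hsplit, matrix_exp_smul_idem _ _ hP]
    have hval : t * n = (Int.cast ((m:ℤ)) : ℂ) * (2 * Real.pi * Complex.I) := by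
      rw [ht, hn]
      push_cast
      ring
    rw [hval, Complex.exp_int_mul_two_pi_mul_I]
    simp
  have hE3 : NormedSpace.exp (t • B) = 1 - B := by
    have hP : ((2:ℂ)⁻¹ • B) * ((2:ℂ)⁻¹ • B) = (2:ℂ)⁻¹ • B := by
      rw [Matrix.smul_mul, Matrix.mul_smul, hBB, smul_smul, smul_smul]
      congr 1
      norm_num
    have hsplit : t • B = (t * 2) • ((2:ℂ)⁻¹ • B) := by
      rw [smul_smul]
      congr 1
      ring
    rw [hsplit, matrix_exp_smul_idem _ _ hP]
    have hval : t * 2 = (Real.pi : ℂ) * Complex.I := by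
      rw [ht]
      push_cast
      ring
    rw [hval, Complex.exp_pi_mul_I, smul_smul]
    have hco : ((-1 : ℂ) - 1) * 2⁻¹ = -1 := by norm_num
    rw [hco, neg_one_smul, ← sub_eq_add_neg]
  have hexp : NormedSpace.exp ((-t) • G.lapMatrix ℂ) = 1 - B := by
    rw [hdecomp, Matrix.exp_add_of_commute _ _ hc1,
      Matrix.exp_add_of_commute _ _ hc2, hE1, hE2, hE3]
    rw [one_mul, one_mul]
  rw [hexp]
  have hji : j ≠ i := (hnd i j hij).symm
  have hBji : B j i = -1 := by
    have hmem : s(j,i) ∈ M := by rw [Sym2.eq_swap]; exact hij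
    simp only [hB, Matrix.of_apply, if_neg hji]
    rw [if_pos hmem]
  rw [Matrix.sub_apply, Matrix.one_apply_ne hji, hBji]
  ring

/-- Let `n = 4m` with `m ≥ 1`, let `M` be a matching of `K_n` (a set of
pairwise vertex-disjoint non-loop edges) of size at most `2m`, and `G = K_n − M`.  Then
for every edge `{i,j} ∈ M`, `p_G(i,j,π/2) = 1`. -/
theorem transferProb_knMinusMatching (m n : ℕ) (hm : 1 ≤ m) (hn : n = 4 * m)
    (M : Finset (Sym2 (Fin n)))
    (hloop : ∀ e ∈ M, ¬ e.IsDiag)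
    (hdisj : ∀ e ∈ M, ∀ f ∈ M, e ≠ f → ∀ v : Fin n, v ∈ e → v ∉ f)
    (hcard : M.card ≤ 2 * m) :
    ∀ i j : Fin n, s(i, j) ∈ M →
      transferProb (KnMinusSet n M) i j (Real.pi / 2) = 1 := by
  have h := knMinus_exp_entry m n hm hn M hloop hdisj
  intro i j hij
  simp only [transferProb, Ut]
  rw [h i j hij]
  simp
end

section
/- Let a ≥ 3 be an odd natural number. Then the maximum over t ∈ [0, 2π] of min{−cos(2t), −cos(at), cos((a−2)t)} equals cos(π/a); that is, min{−cos(2t), −cos(at), cos((a−2)t)} ≤ cos(π/a) for all t ∈ [0,2π], and there exists t ∈ [0,2π] at which all three of −cos(2t), −cos(at), cos((a−2)t) are at least cos(π/a) with the minimum equal to cos(π/a). -/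
open Real

private lemma abs_cos_shift (x : ℝ) (m : ℤ) : |Real.cos (x + π / 2 + m * π)| = |Real.sin x| := by
  rw [Real.cos_add_int_mul_pi, abs_mul, Real.cos_add_pi_div_two, abs_neg]
  have h1 : |((-1 : ℝ)) ^ m| = 1 := by
    rcases Int.even_or_odd m with he | ho
    · rw [he.neg_one_zpow]; norm_num
    · rw [Odd.neg_one_zpow ho]; norm_num
  rw [h1, one_mul]

/-- location lemma: if `|cos t| < sin(π/(2a))` and `t ∈ [0,π]` then `|t - π/2| < π/(2a)`. -/
private lemma interval_loc (a : ℕ) (ha : 3 ≤ a) {t : ℝ} (ht0 : 0 ≤ t) (ht1 : t ≤ π)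
    (habs : |Real.cos t| < Real.sin (π / (2 * a))) : |t - π / 2| < π / (2 * a) := by
  have hπ := Real.pi_pos
  have ha3 : (3 : ℝ) ≤ (a : ℝ) := by exact_mod_cast ha
  have hz0 : 0 < π / (2 * a) := by positivity
  have hz6 : π / (2 * a) ≤ π / 6 :=
    div_le_div_of_nonneg_left hπ.le (by norm_num) (by linarith)
  set z := π / (2 * a) with hz
  have hy1mem : π / 2 - z ∈ Set.Icc 0 π := by
    constructor <;> [linarith; linarith]
  have hy2mem : π / 2 + z ∈ Set.Icc 0 π := by
    constructor <;> [linarith; linarith]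
  have htmem : t ∈ Set.Icc 0 π := ⟨ht0, ht1⟩
  have habs' := abs_lt.mp habs
  -- cos t < cos (π/2 - z)
  have h1 : Real.cos t < Real.cos (π / 2 - z) := by
    rw [Real.cos_pi_div_two_sub]
    exact lt_of_le_of_lt (le_abs_self _) habs
  -- cos (π/2 + z) < cos t
  have h2 : Real.cos (π / 2 + z) < Real.cos t := by
    have : Real.cos (π / 2 + z) = -Real.sin z := by
      have : π / 2 + z = π - (π / 2 - z) := by ring
      rw [this, Real.cos_pi_sub, Real.cos_pi_div_two_sub]
    rw [this]
    linarith [habs'.1, neg_abs_le (Real.cos t)]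
  have hlt1 : π / 2 - z < t := (Real.strictAntiOn_cos.lt_iff_gt htmem hy1mem).mp h1
  have hlt2 : t < π / 2 + z := (Real.strictAntiOn_cos.lt_iff_gt hy2mem htmem).mp h2
  rw [abs_lt]; constructor <;> linarith

/-- upper bound core: if `cos 2t < -cos(π/a)` for `t ∈ [0, 2π]`, then
`cos((a-2)t) < cos(π/a)`. -/
private lemma upper_core (a : ℕ) (ha : 3 ≤ a) (hodd : Odd a) {t : ℝ}
    (ht0 : 0 ≤ t) (ht1 : t ≤ 2 * π)
    (h : Real.cos (2 * t) < -Real.cos (π / a)) :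
    Real.cos (((a : ℝ) - 2) * t) < Real.cos (π / a) := by
  have hπ := Real.pi_pos
  have ha3 : (3 : ℝ) ≤ (a : ℝ) := by exact_mod_cast ha
  have ha0 : (a : ℝ) ≠ 0 := by linarith
  obtain ⟨k, hk⟩ := hodd
  have hk1 : 1 ≤ k := by omega
  obtain ⟨j, hj⟩ : ∃ j, a = 2 * j + 3 := ⟨k - 1, by omega⟩
  have hjR : (a : ℝ) = 2 * (j : ℝ) + 3 := by exact_mod_cast congrArg (Nat.cast (R := ℝ)) hj
  have hz0 : 0 < π / (2 * a) := by positivity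
  -- Step 1 : |cos t| < sin (π/(2a))
  have hhalf : π / a = 2 * (π / (2 * a)) := by field_simp
  have hc2 : Real.cos (π / a) = 1 - 2 * Real.sin (π / (2 * a)) ^ 2 := by
    rw [hhalf, Real.cos_two_mul]
    have := Real.sin_sq_add_cos_sq (π / (2 * a))
    nlinarith
  have hsinpos : 0 < Real.sin (π / (2 * a)) := by
    apply Real.sin_pos_of_pos_of_lt_pi hz0
    have : π / (2 * a) ≤ π / 6 :=
      div_le_div_of_nonneg_left hπ.le (by norm_num) (by linarith)
    linarith
  have hsq : Real.cos t ^ 2 < Real.sin (π / (2 * a)) ^ 2 := by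
    have := Real.cos_two_mul t
    nlinarith
  have habs : |Real.cos t| < Real.sin (π / (2 * a)) := by
    nlinarith [sq_abs (Real.cos t), abs_nonneg (Real.cos t)]
  -- Step 2 : find s and m
  obtain ⟨s, hsabs, m, hm⟩ :
      ∃ s : ℝ, |s| < π / (2 * a) ∧ ∃ m : ℤ,
        ((a : ℝ) - 2) * t = ((a : ℝ) - 2) * s + π / 2 + m * π := by
    rcases le_total t π with hcase | hcase
    · have hloc := interval_loc a ha ht0 hcase habs
      refine ⟨t - π / 2, hloc, (j : ℤ), ?_⟩
      push_cast
      rw [hjR]; ring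
    · have ht0' : 0 ≤ 2 * π - t := by linarith
      have ht1' : 2 * π - t ≤ π := by linarith
      have habs' : |Real.cos (2 * π - t)| < Real.sin (π / (2 * a)) := by
        rwa [Real.cos_two_pi_sub]
      have hloc := interval_loc a ha ht0' ht1' habs'
      refine ⟨t - 3 * π / 2, by rw [abs_sub_comm] at hloc; rw [abs_lt] at *; constructor <;> linarith [hloc.1, hloc.2], (3 * (j : ℤ) + 1), ?_⟩
      push_cast
      rw [hjR]; ring
  -- Step 3 : |cos((a-2)t)| = |sin((a-2)s)|
  have hkey : |Real.cos (((a : ℝ) - 2) * t)| = |Real.sin (((a : ℝ) - 2) * s)| := by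
    rw [hm, abs_cos_shift]
  -- Step 4 : bound the sine
  have ha2 : (1 : ℝ) ≤ (a : ℝ) - 2 := by linarith
  have hzs : |((a : ℝ) - 2) * s| < π / 2 - π / a := by
    rw [abs_mul, abs_of_nonneg (by linarith : (0:ℝ) ≤ (a : ℝ) - 2)]
    have h1 : ((a : ℝ) - 2) * |s| < ((a : ℝ) - 2) * (π / (2 * a)) :=
      mul_lt_mul_of_pos_left hsabs (by linarith)
    have h2 : ((a : ℝ) - 2) * (π / (2 * a)) = π / 2 - π / a := by
      field_simp
    linarith
  have hgoal : Real.sin |((a : ℝ) - 2) * s| < Real.sin (π / 2 - π / a) := by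
    apply Real.strictMonoOn_sin ?_ ?_ hzs
    · constructor
      · linarith [abs_nonneg (((a : ℝ) - 2) * s)]
      · have hpa : 0 < π / a := by positivity
        linarith
    · constructor
      · have : π / a ≤ π / 2 := by
          apply div_le_div_of_nonneg_left hπ.le (by norm_num) (by linarith)
        linarith
      · have : 0 < π / a := by positivity
        linarith
  have hsin_abs : |Real.sin (((a : ℝ) - 2) * s)| = Real.sin |((a : ℝ) - 2) * s| := by
    rcases abs_cases (((a : ℝ) - 2) * s) with ⟨he, hp⟩ | ⟨he, hp⟩
    · rw [he, abs_of_nonneg]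
      apply Real.sin_nonneg_of_nonneg_of_le_pi hp
      have : |((a : ℝ) - 2) * s| ≤ π := by
        have hpa : 0 < π / a := by positivity
        rw [he] at hzs ⊢; linarith
      rwa [he] at this
    · have hs0 : ((a : ℝ) - 2) * s ≤ 0 := by linarith
      have hlb : -π ≤ ((a : ℝ) - 2) * s := by
        have hle : |((a : ℝ) - 2) * s| ≤ π := by
          have hpa : 0 < π / a := by positivity
          linarith
        linarith [neg_abs_le (((a : ℝ) - 2) * s)]
      have hnp := Real.sin_nonpos_of_nonpos_of_neg_pi_le hs0 hlb
      rw [he, Real.sin_neg, abs_of_nonpos hnp]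
  calc Real.cos (((a : ℝ) - 2) * t) ≤ |Real.cos (((a : ℝ) - 2) * t)| := le_abs_self _
    _ = Real.sin |((a : ℝ) - 2) * s| := by rw [hkey, hsin_abs]
    _ < Real.sin (π / 2 - π / a) := hgoal
    _ = Real.cos (π / a) := Real.sin_pi_div_two_sub _

/-- For odd `a ≥ 3`, the maximum over `t ∈ [0, 2π]` of
`min{−cos(2t), −cos(at), cos((a−2)t)}` equals `cos(π/a)`. -/
theorem max_min_cos_eq_cos_pi_div_odd (a : ℕ) (ha : 3 ≤ a) (hodd : Odd a) :
    IsGreatest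
      ((fun t : ℝ =>
          min (-Real.cos (2 * t))
            (min (-Real.cos ((a : ℝ) * t)) (Real.cos (((a : ℝ) - 2) * t)))) ''
        Set.Icc 0 (2 * Real.pi))
      (Real.cos (Real.pi / a)) := by
  have hπ := Real.pi_pos
  have ha3 : (3 : ℝ) ≤ (a : ℝ) := by exact_mod_cast ha
  have ha0 : (a : ℝ) ≠ 0 := by linarith
  have hc1 : Real.cos (π / a) ≤ 1 := Real.cos_le_one _
  have hz6 : π / (2 * a) ≤ π / 6 :=
    div_le_div_of_nonneg_left hπ.le (by norm_num) (by linarith)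
  have hz0 : 0 < π / (2 * a) := by positivity
  constructor
  · -- membership : witness
    obtain ⟨k, hk⟩ := hodd
    rcases Nat.even_or_odd k with ⟨m, hm⟩ | ⟨m, hm⟩
    · -- a = 4m + 1, witness t₀ = π/2 + π/(2a)
      have haR : (a : ℝ) = 4 * m + 1 := by rw [hk, hm]; push_cast; ring
      have hm0 : (4 * (m : ℝ) + 1) ≠ 0 := by positivity
      refine ⟨π / 2 + π / (2 * a), ⟨by linarith, by linarith⟩, ?_⟩
      have e1 : 2 * (π / 2 + π / (2 * a)) = π / a + π := by field_simp; ring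
      have e2 : (a : ℝ) * (π / 2 + π / (2 * a)) = π + (m : ℝ) * (2 * π) := by
        rw [haR]; field_simp; ring
      have e3 : ((a : ℝ) - 2) * (π / 2 + π / (2 * a)) = -(π / a) + (m : ℝ) * (2 * π) := by
        rw [haR]; field_simp; ring
      simp only
      rw [e1, e2, e3, Real.cos_add_pi, Real.cos_add_nat_mul_two_pi,
        Real.cos_add_nat_mul_two_pi, Real.cos_pi, Real.cos_neg, neg_neg, neg_neg,
        min_eq_right hc1, min_self]
    · -- a = 4m + 3, witness t₀ = π/2 - π/(2a)
      have haR : (a : ℝ) = 4 * m + 3 := by rw [hk, hm]; push_cast; ring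
      have hm0 : (4 * (m : ℝ) + 3) ≠ 0 := by positivity
      refine ⟨π / 2 - π / (2 * a), ⟨by linarith, by linarith⟩, ?_⟩
      have e1 : 2 * (π / 2 - π / (2 * a)) = π - π / a := by field_simp
      have e2 : (a : ℝ) * (π / 2 - π / (2 * a)) = π + (m : ℝ) * (2 * π) := by
        rw [haR]; field_simp; ring
      have e3 : ((a : ℝ) - 2) * (π / 2 - π / (2 * a)) = π / a + (m : ℝ) * (2 * π) := by
        rw [haR]; field_simp; ring
      simp only
      rw [e1, e2, e3, Real.cos_pi_sub, Real.cos_add_nat_mul_two_pi,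
        Real.cos_add_nat_mul_two_pi, Real.cos_pi, neg_neg, neg_neg,
        min_eq_right hc1, min_self]
  · -- upper bound
    rintro x ⟨t, ht, rfl⟩
    simp only
    by_cases hca : Real.cos (2 * t) < -Real.cos (π / a)
    · exact ((min_le_right _ _).trans (min_le_right _ _)).trans
        (upper_core a ha hodd ht.1 ht.2 hca).le
    · push_neg at hca
      exact (min_le_left _ _).trans (by linarith)
end

section
/- Let a ≥ 3 be an odd natural number. Then the maximum over t ∈ [0, 2π] of min{−cos(2t), cos(at), −cos((a−2)t)} equals cos(π/a); that is, min{−cos(2t), cos(at), −cos((a−2)t)} ≤ cos(π/a) for all t ∈ [0,2π], and this bound is attained for some t ∈ [0,2π]. -/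
open Real

private lemma cos_nat_mul_pi_add' (n : ℕ) (x : ℝ) :
    Real.cos ((n : ℝ) * Real.pi + x) = (-1) ^ n * Real.cos x := by
  induction n with
  | zero => simp
  | succ n ih =>
      have h : ((n + 1 : ℕ) : ℝ) * Real.pi + x = ((n : ℝ) * Real.pi + x) + Real.pi := by
        push_cast; ring
      rw [h, Real.cos_add_pi, ih, pow_succ]
      ring

private lemma abs_cos_odd' (N : ℕ) (hN : Odd N) (x : ℝ) :
    |Real.cos ((N : ℝ) * (Real.pi / 2) + x)| = |Real.sin x| := by
  obtain ⟨n, rfl⟩ := hN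
  have h : ((2 * n + 1 : ℕ) : ℝ) * (Real.pi / 2) + x = (n : ℝ) * Real.pi + (x + Real.pi / 2) := by
    push_cast; ring
  rw [h, cos_nat_mul_pi_add', Real.cos_add_pi_div_two, abs_mul, abs_neg, abs_pow]
  simp

private lemma contra_aux (a : ℕ) (ha : 3 ≤ a) (N : ℕ) (hN : Odd N) (s t : ℝ)
    (hts : ((a : ℝ) - 2) * t = (N : ℝ) * (Real.pi / 2) + ((a : ℝ) - 2) * s)
    (hs : |s| < Real.pi / (2 * a))
    (hb : Real.cos (Real.pi / a) < -Real.cos (((a : ℝ) - 2) * t)) : False := by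
  have haR : (3 : ℝ) ≤ (a : ℝ) := by exact_mod_cast ha
  have hπ := Real.pi_pos
  have hπa_pos : 0 < Real.pi / a := by positivity
  have hπa3 : Real.pi / a ≤ Real.pi / 3 :=
    div_le_div_of_nonneg_left hπ.le (by norm_num) haR
  set u : ℝ := ((a : ℝ) - 2) * s with hu_def
  have h1 : Real.cos (Real.pi / a) < |Real.sin u| := by
    rw [← abs_cos_odd' N hN u, ← hts]
    exact lt_of_lt_of_le hb (neg_le_abs _)
  have hu : |u| ≤ Real.pi / 2 - Real.pi / a := by
    have h2 : |u| = ((a : ℝ) - 2) * |s| := by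
      rw [hu_def, abs_mul, abs_of_nonneg (by linarith : (0 : ℝ) ≤ (a : ℝ) - 2)]
    have h3 : ((a : ℝ) - 2) * |s| ≤ ((a : ℝ) - 2) * (Real.pi / (2 * a)) :=
      mul_le_mul_of_nonneg_left hs.le (by linarith)
    have h4 : ((a : ℝ) - 2) * (Real.pi / (2 * a)) = Real.pi / 2 - Real.pi / a := by
      field_simp
    rw [h2]; rw [h4] at h3; exact h3
  rw [abs_le] at hu
  have hbd : |Real.sin u| ≤ Real.sin (Real.pi / 2 - Real.pi / a) := by
    rw [abs_le]
    constructor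
    · have : Real.sin (-(Real.pi / 2 - Real.pi / a)) ≤ Real.sin u :=
        Real.sin_le_sin_of_le_of_le_pi_div_two (by linarith) (by linarith) (by linarith)
      rwa [Real.sin_neg] at this
    · exact Real.sin_le_sin_of_le_of_le_pi_div_two (by linarith) (by linarith) hu.2
  rw [Real.sin_pi_div_two_sub] at hbd
  linarith

/-- For odd `a ≥ 3`, the maximum over `t ∈ [0, 2π]` of
`min{−cos(2t), cos(at), −cos((a−2)t)}` equals `cos(π/a)`. -/
theorem max_min_cos_eq_cos_pi_div_odd' (a : ℕ) (ha : 3 ≤ a) (hodd : Odd a) :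
    IsGreatest
      ((fun t : ℝ =>
          min (-Real.cos (2 * t))
            (min (Real.cos ((a : ℝ) * t)) (-Real.cos (((a : ℝ) - 2) * t)))) ''
        Set.Icc 0 (2 * Real.pi))
      (Real.cos (Real.pi / a)) := by
  have haR : (3 : ℝ) ≤ (a : ℝ) := by exact_mod_cast ha
  have hπ := Real.pi_pos
  have haR0 : (0 : ℝ) < (a : ℝ) := by linarith
  have hπa_pos : 0 < Real.pi / a := by positivity
  have hπa3 : Real.pi / a ≤ Real.pi / 3 :=
    div_le_div_of_nonneg_left hπ.le (by norm_num) haR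
  have hmin : min (Real.cos (Real.pi / a))
      (min 1 (-Real.cos (Real.pi - Real.pi / a))) = Real.cos (Real.pi / a) := by
    rw [Real.cos_pi_sub, neg_neg, min_eq_right (Real.cos_le_one _), min_self]
  have hodd2 : a % 2 = 1 := Nat.odd_iff.mp hodd
  constructor
  · -- membership
    have h4 : a % 4 = 1 ∨ a % 4 = 3 := by omega
    rcases h4 with h4 | h4
    · -- a = 4k+1, k ≥ 1
      set k := a / 4 with hk_def
      have hk : a = 4 * k + 1 := by omega
      have hk1 : 1 ≤ k := by omega
      refine ⟨((a : ℝ) - 1) * Real.pi / (2 * a), ⟨?_, ?_⟩, ?_⟩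
      · have : (0:ℝ) ≤ (a : ℝ) - 1 := by linarith
        positivity
      · rw [div_le_iff₀ (by positivity)]
        nlinarith
      · have e2 : 2 * (((a : ℝ) - 1) * Real.pi / (2 * a)) = Real.pi - Real.pi / a := by
          field_simp
        have ea : (a : ℝ) * (((a : ℝ) - 1) * Real.pi / (2 * a)) = (k : ℝ) * (2 * Real.pi) := by
          rw [hk]; push_cast; field_simp; ring
        have eb : ((a : ℝ) - 2) * (((a : ℝ) - 1) * Real.pi / (2 * a)) =
            (Real.pi - Real.pi / a) + Real.pi / a + Real.pi / a +
              ((k - 1 : ℕ) : ℝ) * (2 * Real.pi) := by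
          rw [hk]
          have : ((4 * k + 1 : ℕ) : ℝ) = 4 * (k : ℝ) + 1 := by push_cast; ring
          rw [this]
          have hne : 4 * (k : ℝ) + 1 ≠ 0 := by positivity
          have hkc : ((k - 1 : ℕ) : ℝ) = (k : ℝ) - 1 := by
            have := hk1; push_cast [this]; ring
          rw [hkc]
          field_simp
          ring
        simp only [e2, ea, eb]
        rw [Real.cos_pi_sub]
        rw [Real.cos_add_nat_mul_two_pi]
        have ec : Real.pi - Real.pi / ↑a + Real.pi / ↑a + Real.pi / ↑a =
            Real.pi / a + Real.pi := by ring
        rw [ec, Real.cos_add_pi]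
        have ek : Real.cos ((k : ℝ) * (2 * Real.pi)) = 1 := Real.cos_nat_mul_two_pi k
        rw [ek, neg_neg, min_eq_right (Real.cos_le_one _), min_self]
    · -- a = 4k+3
      set k := a / 4 with hk_def
      have hk : a = 4 * k + 3 := by omega
      refine ⟨((a : ℝ) + 1) * Real.pi / (2 * a), ⟨by positivity, ?_⟩, ?_⟩
      · rw [div_le_iff₀ (by positivity)]
        nlinarith
      · have e2 : 2 * (((a : ℝ) + 1) * Real.pi / (2 * a)) = Real.pi / a + Real.pi := by
          field_simp; ring
        have ea : (a : ℝ) * (((a : ℝ) + 1) * Real.pi / (2 * a)) =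
            ((k + 1 : ℕ) : ℝ) * (2 * Real.pi) := by
          rw [hk]; push_cast; field_simp; ring
        have eb : ((a : ℝ) - 2) * (((a : ℝ) + 1) * Real.pi / (2 * a)) =
            (Real.pi - Real.pi / a) + (k : ℕ) * (2 * Real.pi) := by
          rw [hk]
          have : ((4 * k + 3 : ℕ) : ℝ) = 4 * (k : ℝ) + 3 := by push_cast; ring
          rw [this]
          have hne : 4 * (k : ℝ) + 3 ≠ 0 := by positivity
          field_simp
          ring
        simp only [e2, ea, eb]
        rw [Real.cos_add_pi, Real.cos_add_nat_mul_two_pi, Real.cos_pi_sub,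
          Real.cos_nat_mul_two_pi, neg_neg, min_eq_right (Real.cos_le_one _), min_self]
  · -- upper bound
    rintro x ⟨t, ⟨ht0, ht2⟩, rfl⟩
    simp only
    by_contra hlt
    push_neg at hlt
    have hhalf : Real.pi / (2 * (a : ℝ)) = Real.pi / (a : ℝ) / 2 := by ring
    have h2 : Real.cos (2 * t) < -Real.cos (Real.pi / a) := by
      have := lt_of_lt_of_le hlt (min_le_left _ _); linarith
    have hb : Real.cos (Real.pi / a) < -Real.cos (((a : ℝ) - 2) * t) :=
      lt_of_lt_of_le hlt ((min_le_right _ _).trans (min_le_right _ _))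
    have key : ∀ y : ℝ, 0 ≤ y → y ≤ Real.pi - Real.pi / a →
        -Real.cos (Real.pi / a) ≤ Real.cos y := by
      intro y hy hy'
      have := Real.cos_le_cos_of_nonneg_of_le_pi hy (by linarith) hy'
      rwa [Real.cos_pi_sub] at this
    have hclaim : |t - Real.pi / 2| < Real.pi / (2 * a) ∨
        |t - 3 * Real.pi / 2| < Real.pi / (2 * a) := by
      by_contra hcon
      push_neg at hcon
      obtain ⟨hc1, hc2⟩ := hcon
      rcases le_abs.mp hc1 with h1 | h1
      · -- t ≥ π/2 + π/(2a)
        rcases le_abs.mp hc2 with h2' | h2'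
        · -- t ≥ 3π/2 + π/(2a) : use y = 4π − 2t
          have h5 : Real.cos (2 * t) = Real.cos (4 * Real.pi - 2 * t) := by
            have : (4 : ℝ) * Real.pi - 2 * t = 2 * Real.pi - (2 * t - 2 * Real.pi) := by ring
            rw [this, Real.cos_two_pi_sub, Real.cos_sub_two_pi]
          have := key (4 * Real.pi - 2 * t) (by linarith) (by linarith)
          rw [← h5] at this; linarith
        · -- π/2 + π/(2a) ≤ t ≤ 3π/2 − π/(2a)
          rcases le_total t Real.pi with hto | hto
          · have h5 : Real.cos (2 * t) = Real.cos (2 * Real.pi - 2 * t) :=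
              (Real.cos_two_pi_sub _).symm
            have := key (2 * Real.pi - 2 * t) (by linarith) (by linarith)
            rw [← h5] at this; linarith
          · have h5 : Real.cos (2 * t) = Real.cos (2 * t - 2 * Real.pi) :=
              (Real.cos_sub_two_pi _).symm
            have := key (2 * t - 2 * Real.pi) (by linarith) (by linarith)
            rw [← h5] at this; linarith
      · -- t ≤ π/2 − π/(2a)
        have := key (2 * t) (by linarith) (by linarith)
        linarith
    have hodda2 : Odd (a - 2) := by
      obtain ⟨m, hm⟩ := hodd
      exact ⟨m - 1, by omega⟩
    have hcast : ((a - 2 : ℕ) : ℝ) = (a : ℝ) - 2 := by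
      have : (2 : ℕ) ≤ a := by omega
      push_cast [this]; ring
    rcases hclaim with hs | hs
    · refine contra_aux a ha (a - 2) hodda2 (t - Real.pi / 2) t ?_ hs hb
      rw [hcast]; ring
    · refine contra_aux a ha (3 * (a - 2)) ⟨3 * ((a - 2) / 2) + 1, by omega⟩
        (t - 3 * Real.pi / 2) t ?_ hs hb
      have : ((3 * (a - 2) : ℕ) : ℝ) = 3 * ((a : ℝ) - 2) := by push_cast [show (2:ℕ) ≤ a by omega]; ring
      rw [this]; ring
end

section
/- Let a ≥ 3 be an odd natural number and let α, β, γ be positive real numbers with α ≥ β and α ≥ γ. Then for every t ∈ ℝ, |−α·e^{−i(a−2)t} + β·e^{−iat} + γ| ≤ ((α+β+γ)² − (1 − cos(π/a))·βγ)^{1/2}. -/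
open Real Complex

set_option maxHeartbeats 1000000


lemma aux_mul_sin_le (c θ : ℝ) (hc : 0 ≤ c) (hc1 : c ≤ 1) (hθ : 0 ≤ θ) (hθπ : θ ≤ π) :
    c * Real.sin θ ≤ Real.sin (c * θ) := by
  have h := (strictConcaveOn_sin_Icc.concaveOn).2 (Set.mem_Icc.2 ⟨hθ, hθπ⟩)
      (Set.mem_Icc.2 ⟨le_rfl, Real.pi_pos.le⟩) hc (sub_nonneg.2 hc1) (by ring)
  simpa using h

lemma neg_one_zpow_mul_self (k : ℤ) : ((-1:ℝ))^k * ((-1:ℝ))^k = 1 := by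
  rw [← zpow_add₀ (by norm_num : (-1:ℝ) ≠ 0)]
  exact Even.neg_one_zpow ⟨k, by ring⟩

lemma abs_neg_one_zpow' (k : ℤ) : |((-1:ℝ))^k| = 1 := by
  rcases k.even_or_odd with h | h
  · rw [h.neg_one_zpow]; simp
  · rw [h.neg_one_zpow]; simp

lemma aux_prod_ge_neg_one (x y : ℝ) (hx1 : -1 ≤ x) (hx2 : x ≤ 1) (hy1 : -1 ≤ y) (hy2 : y ≤ 1) :
    -1 ≤ x * y := by nlinarith

/-- Core estimate: for `4 ≤ A`, `A * θ = π/2`, `0 ≤ v < θ`: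
`sin θ ^ 2 / 2 ≤ 1 + sin v ^ 2 - sin (A * v)`. -/
lemma aux_core (A θ v : ℝ) (hA4 : 4 ≤ A) (hθpos : 0 < θ) (hθ8 : θ ≤ π / 8)
    (hAθ : A * θ = π / 2) (hv0 : 0 ≤ v) (hvθ : v < θ) :
    Real.sin θ ^ 2 / 2 ≤ 1 + Real.sin v ^ 2 - Real.sin (A * v) := by
  have hA0 : (0:ℝ) < A := by linarith
  have hpi := pi_pos
  set s : ℝ := Real.sin θ with hsdef
  have hspos : 0 < s := Real.sin_pos_of_pos_of_lt_pi hθpos (by linarith)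
  have hs1 : s ≤ 1 := Real.sin_le_one θ
  have hs2 : s ^ 2 ≤ 1 := pow_le_one₀ hspos.le hs1
  have hAv : A * v < π / 2 := by rw [← hAθ]; exact mul_lt_mul_of_pos_left hvθ hA0
  have hAv0 : 0 ≤ A * v := mul_nonneg hA0.le hv0
  by_cases h3 : Real.sin (A * v) ≤ 1 - s ^ 2 / 2
  · have := sq_nonneg (Real.sin v)
    linarith
  · push_neg at h3
    have hcosAv : 0 ≤ Real.cos (A * v) := Real.cos_nonneg_of_mem_Icc ⟨by linarith, hAv.le⟩
    have hpy := Real.sin_sq_add_cos_sq (A * v)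
    have hsq : (1 - s^2/2) * (1 - s^2/2) < Real.sin (A*v) * Real.sin (A*v) :=
      mul_lt_mul'' h3 h3 (by linarith) (by linarith)
    have h4 : Real.cos (A * v) ^ 2 < s ^ 2 := by
      nlinarith [sq_nonneg (s*s), hpy, hsq]
    have hclt : Real.cos (A * v) < s := by
      by_contra hcon
      push_neg at hcon
      have := pow_le_pow_left₀ hspos.le hcon 2
      linarith
    have hgt : π / 2 - θ < A * v := by
      by_contra hcon
      push_neg at hcon
      have hle : Real.cos (π / 2 - θ) ≤ Real.cos (A * v) :=
        Real.strictAntiOn_cos.antitoneOn ⟨hAv0, by linarith⟩ ⟨by linarith, by linarith⟩ hcon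
      rw [Real.cos_pi_div_two_sub] at hle
      rw [← hsdef] at hle
      linarith
    have hABθ : π / 2 - θ = (A - 1) * θ := by rw [← hAθ]; ring
    have hvgt : ((A - 1) / A) * θ < v := by
      rw [div_mul_eq_mul_div, div_lt_iff₀ hA0]
      linarith [hgt, hABθ]
    have hc0 : (0:ℝ) ≤ (A - 1) / A := div_nonneg (by linarith) hA0.le
    have hc1 : (A - 1) / A ≤ 1 := by rw [div_le_one hA0]; linarith
    have hcθ0 : 0 ≤ ((A - 1) / A) * θ := mul_nonneg hc0 hθpos.le
    have hcθ1 : ((A - 1) / A) * θ ≤ θ := by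
      calc ((A-1)/A) * θ ≤ 1 * θ := mul_le_mul_of_nonneg_right hc1 hθpos.le
        _ = θ := by ring
    have hconc : ((A - 1) / A) * s ≤ Real.sin (((A - 1) / A) * θ) :=
      aux_mul_sin_le _ _ hc0 hc1 hθpos.le (by linarith)
    have hsinvgt : Real.sin (((A - 1) / A) * θ) < Real.sin v :=
      Real.strictMonoOn_sin ⟨by linarith, by linarith⟩ ⟨by linarith, by linarith⟩ hvgt
    have hsge : (3/4) * s ≤ ((A - 1) / A) * s := by
      have h34 : (3:ℝ)/4 ≤ (A - 1) / A := by rw [le_div_iff₀ hA0]; linarith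
      exact mul_le_mul_of_nonneg_right h34 hspos.le
    have hsinAv_le : Real.sin (A * v) ≤ 1 := Real.sin_le_one _
    have h9 : (3/4) * s < Real.sin v := by linarith
    have h10 : ((3/4) * s) ^ 2 ≤ Real.sin v ^ 2 :=
      pow_le_pow_left₀ (by positivity) h9.le 2
    linarith [h10, hsinAv_le]

lemma aux_claim (a : ℕ) (ha : 3 ≤ a) (hodd : Odd a) (t : ℝ) :
    Real.sin (π / (2 * a)) ^ 2 / 2 ≤ 1 + Real.cos t ^ 2 + Real.sin (((a:ℝ) - 1) * t) * Real.sin t := by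
  by_cases ha3 : a = 3
  · subst ha3
    have e1 : ((3:ℕ):ℝ) - 1 = 2 := by norm_num
    have e2 : π / (2 * ((3:ℕ):ℝ)) = π / 6 := by norm_num
    rw [e1, e2, Real.sin_pi_div_six, Real.sin_two_mul]
    have h1 := Real.neg_one_le_cos t
    have h2 := Real.cos_le_one t
    have h3 := Real.sin_sq_add_cos_sq t
    nlinarith [sq_nonneg (Real.cos t + 1), sq_nonneg (Real.cos t - 1), sq_nonneg (2*Real.cos t + 1),
      mul_nonneg (sub_nonneg.2 h2) (by linarith : (0:ℝ) ≤ Real.cos t + 1)]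
  · have ha4 : 4 ≤ a := by omega
    have hpi := pi_pos
    set A : ℝ := (a:ℝ) with hAdef
    have hA4 : (4:ℝ) ≤ A := by rw [hAdef]; exact_mod_cast ha4
    have hA0 : (0:ℝ) < A := by linarith
    set θ : ℝ := π / (2 * A) with hθdef
    have hθpos : 0 < θ := by positivity
    have hθ8 : θ ≤ π / 8 := by
      rw [hθdef, div_le_div_iff₀ (by positivity) (by norm_num)]
      nlinarith
    have hθhalf : θ < π / 2 := by linarith
    have hAθ : A * θ = π / 2 := by rw [hθdef]; field_simp
    set s : ℝ := Real.sin θ with hsdef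
    have hspos : 0 < s := Real.sin_pos_of_pos_of_lt_pi hθpos (by linarith)
    by_cases hcase : s ^ 2 / 2 ≤ Real.cos t ^ 2
    · have hge := aux_prod_ge_neg_one (Real.sin ((A - 1) * t)) (Real.sin t)
        (Real.neg_one_le_sin _) (Real.sin_le_one _) (Real.neg_one_le_sin t) (Real.sin_le_one t)
      linarith
    · push_neg at hcase
      set k : ℤ := ⌊t / π⌋ with hkdef
      set u : ℝ := t - π / 2 - k * π with hudef
      have ht : t = u + π / 2 + k * π := by rw [hudef]; ring
      have hk1 : (k:ℝ) * π ≤ t := by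
        have h := Int.floor_le (t / π)
        rw [hkdef]
        calc ((⌊t / π⌋ : ℤ):ℝ) * π ≤ (t / π) * π := mul_le_mul_of_nonneg_right h pi_pos.le
          _ = t := by field_simp
      have hk2 : t < (k:ℝ) * π + π := by
        have h : t / π < (⌊t / π⌋ : ℝ) + 1 := Int.lt_floor_add_one (t / π)
        rw [hkdef]
        calc t = (t / π) * π := by field_simp
          _ < ((⌊t / π⌋ : ℝ) + 1) * π := mul_lt_mul_of_pos_right h pi_pos
          _ = ((⌊t / π⌋ : ℤ):ℝ) * π + π := by push_cast; ring
      have hu1 : -(π / 2) ≤ u := by rw [hudef]; linarith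
      have hu2 : u ≤ π / 2 := by rw [hudef]; linarith
      have hcosu : 0 ≤ Real.cos u := Real.cos_nonneg_of_mem_Icc ⟨hu1, hu2⟩
      obtain ⟨m, hm⟩ := hodd
      have hm2 : A - 1 = 2 * (m:ℝ) := by rw [hAdef, hm]; push_cast; ring
      have hst : Real.sin t = (-1)^k * Real.cos u := by
        rw [ht, show u + π/2 + (k:ℝ)*π = (u + π/2) + (k:ℝ)*π from by ring,
          Real.sin_add_int_mul_pi, Real.sin_add_pi_div_two]
      have hct : Real.cos t = (-1)^k * (-Real.sin u) := by
        rw [ht, show u + π/2 + (k:ℝ)*π = (u + π/2) + (k:ℝ)*π from by ring,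
          Real.cos_add_int_mul_pi, Real.cos_add_pi_div_two]
      have hsw : Real.sin ((A - 1) * t) = (-1)^((m : ℤ) * (2*k+1)) * Real.sin ((A - 1) * u) := by
        have harg : (A - 1) * t = (A - 1) * u + (((m:ℤ) * (2*k+1) : ℤ) : ℝ) * π := by
          rw [ht, hm2]; push_cast; ring
        rw [harg, Real.sin_add_int_mul_pi]
      have hct2 : Real.cos t ^ 2 = Real.sin u ^ 2 := by
        rw [hct]; linear_combination (Real.sin u ^ 2) * neg_one_zpow_mul_self k
      have hS : -|Real.sin ((A - 1) * u)| ≤ Real.sin ((A - 1) * t) * Real.sin t := by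
        have habs : |Real.sin ((A - 1) * t) * Real.sin t| ≤ |Real.sin ((A - 1) * u)| := by
          rw [hsw, hst, abs_mul, abs_mul, abs_mul, abs_neg_one_zpow', abs_neg_one_zpow']
          have h1 := Real.abs_cos_le_one u
          have h2 := abs_nonneg (Real.sin ((A - 1) * u))
          nlinarith [h1, h2]
        linarith [neg_abs_le (Real.sin ((A - 1) * t) * Real.sin t)]
      set v : ℝ := |u| with hvdef
      have hv0 : 0 ≤ v := abs_nonneg u
      have hvhalf : v ≤ π / 2 := abs_le.2 ⟨hu1, hu2⟩
      have hsinv : Real.sin v ^ 2 = Real.sin u ^ 2 := by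
        rcases abs_cases u with ⟨h, _⟩ | ⟨h, _⟩
        · rw [hvdef, h]
        · rw [hvdef, h, Real.sin_neg]; ring
      have hsv_lt : Real.sin v ^ 2 < s ^ 2 / 2 := by rw [hsinv, ← hct2]; exact hcase
      have hvθ : v < θ := by
        by_contra hcon
        push_neg at hcon
        have hmono : s ≤ Real.sin v :=
          Real.strictMonoOn_sin.monotoneOn ⟨by linarith, hθhalf.le⟩ ⟨by linarith, hvhalf⟩ hcon
        have h2 := pow_le_pow_left₀ hspos.le hmono 2
        linarith [pow_pos hspos 2]
      have hAv : A * v < π / 2 := by rw [← hAθ]; exact mul_lt_mul_of_pos_left hvθ hA0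
      have hAv0 : 0 ≤ A * v := mul_nonneg hA0.le hv0
      have hA1v0 : 0 ≤ (A - 1) * v := mul_nonneg (by linarith) hv0
      have hA1v : (A - 1) * v ≤ A * v := mul_le_mul_of_nonneg_right (by linarith) hv0
      have habs2 : |Real.sin ((A - 1) * u)| = Real.sin ((A - 1) * v) := by
        have hnn : 0 ≤ Real.sin ((A - 1) * v) :=
          Real.sin_nonneg_of_nonneg_of_le_pi hA1v0 (by linarith)
        rcases abs_cases u with ⟨h, _⟩ | ⟨h, _⟩
        · rw [show (A-1)*u = (A-1)*v from by rw [hvdef, h]]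
          exact abs_of_nonneg hnn
        · rw [show (A-1)*u = -((A-1)*v) from by rw [hvdef, h]; ring, Real.sin_neg, abs_neg]
          exact abs_of_nonneg hnn
      have hmono : Real.sin ((A - 1) * v) ≤ Real.sin (A * v) :=
        Real.strictMonoOn_sin.monotoneOn ⟨by linarith, by linarith⟩ ⟨by linarith, hAv.le⟩ hA1v
      have hfin := aux_core A θ v hA4 hθpos hθ8 hAθ hv0 hvθ
      rw [habs2] at hS
      rw [← hsdef] at hfin
      linarith [hsinv, hct2, hmono, hfin, hS]

lemma aux_key (a : ℕ) (ha : 3 ≤ a) (hodd : Odd a) (t : ℝ) :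
    1 - Real.cos (π / a) ≤
      2 * (3 + Real.cos (2 * t) + Real.cos (((a:ℝ) - 2) * t) - Real.cos ((a:ℝ) * t)) := by
  have hA0 : (0:ℝ) < (a:ℝ) := by
    have : (3:ℝ) ≤ (a:ℝ) := by exact_mod_cast ha
    linarith
  have h1 : Real.cos (((a:ℝ) - 2) * t) - Real.cos ((a:ℝ) * t)
      = 2 * Real.sin (((a:ℝ) - 1) * t) * Real.sin t := by
    rw [Real.cos_sub_cos,
      show ((((a:ℝ) - 2) * t + (a:ℝ) * t) / 2) = ((a:ℝ) - 1) * t from by ring,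
      show ((((a:ℝ) - 2) * t - (a:ℝ) * t) / 2) = -t from by ring, Real.sin_neg]
    ring
  have h2 : Real.cos (π / a) = 1 - 2 * Real.sin (π / (2 * a)) ^ 2 := by
    rw [show π / (a:ℝ) = 2 * (π / (2 * a)) from by field_simp, Real.cos_two_mul']
    have := Real.sin_sq_add_cos_sq (π / (2 * (a:ℝ)))
    linarith
  have h3 := aux_claim a ha hodd t
  have h4 := Real.cos_two_mul t
  linarith [h1, h2, h3, h4]


/-- For odd `a ≥ 3` and positive reals `α ≥ β, γ`, for every `t ∈ ℝ`,
`|−α e^{−i(a−2)t} + β e^{−iat} + γ| ≤ ((α+β+γ)² − (1 − cos(π/a)) βγ)^{1/2}`. -/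
theorem abs_triple_exp_le (a : ℕ) (ha : 3 ≤ a) (hodd : Odd a) (α β γ : ℝ)
    (hα : 0 < α) (hβ : 0 < β) (hγ : 0 < γ) (hβα : β ≤ α) (hγα : γ ≤ α) (t : ℝ) :
    ‖-(α : ℂ) * Complex.exp (-Complex.I * (((a : ℂ) - 2) * (t : ℂ))) +
        (β : ℂ) * Complex.exp (-Complex.I * ((a : ℂ) * (t : ℂ))) + (γ : ℂ)‖ ≤
      Real.sqrt ((α + β + γ) ^ 2 - (1 - Real.cos (Real.pi / a)) * (β * γ)) := by
  have e1 : Complex.exp (-Complex.I * (((a : ℂ) - 2) * (t : ℂ)))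
      = ((Real.cos (((a:ℝ) - 2) * t) : ℝ) : ℂ) - ((Real.sin (((a:ℝ) - 2) * t) : ℝ) : ℂ) * Complex.I := by
    rw [show -Complex.I * (((a : ℂ) - 2) * (t : ℂ)) = ((-(((a:ℝ) - 2) * t) : ℝ) : ℂ) * Complex.I from by
      push_cast; ring]
    rw [Complex.exp_mul_I, ← Complex.ofReal_cos, ← Complex.ofReal_sin, Real.cos_neg, Real.sin_neg]
    push_cast; ring
  have e2 : Complex.exp (-Complex.I * ((a : ℂ) * (t : ℂ)))
      = ((Real.cos ((a:ℝ) * t) : ℝ) : ℂ) - ((Real.sin ((a:ℝ) * t) : ℝ) : ℂ) * Complex.I := by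
    rw [show -Complex.I * ((a : ℂ) * (t : ℂ)) = ((-((a:ℝ) * t) : ℝ) : ℂ) * Complex.I from by
      push_cast; ring]
    rw [Complex.exp_mul_I, ← Complex.ofReal_cos, ← Complex.ofReal_sin, Real.cos_neg, Real.sin_neg]
    push_cast; ring
  have hz : -(α : ℂ) * Complex.exp (-Complex.I * (((a : ℂ) - 2) * (t : ℂ))) +
        (β : ℂ) * Complex.exp (-Complex.I * ((a : ℂ) * (t : ℂ))) + (γ : ℂ)
      = (((-α * Real.cos (((a:ℝ) - 2) * t) + β * Real.cos ((a:ℝ) * t) + γ : ℝ)) : ℂ)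
        + (((α * Real.sin (((a:ℝ) - 2) * t) - β * Real.sin ((a:ℝ) * t) : ℝ)) : ℂ) * Complex.I := by
    rw [e1, e2]; push_cast; ring
  rw [hz, Complex.norm_def, Complex.normSq_add_mul_I]
  apply Real.sqrt_le_sqrt
  have hkey := aux_key a ha hodd t
  have hp1 := Real.sin_sq_add_cos_sq (((a:ℝ) - 2) * t)
  have hp2 := Real.sin_sq_add_cos_sq ((a:ℝ) * t)
  have hcos2 : Real.cos (2 * t)
      = Real.cos ((a:ℝ) * t) * Real.cos (((a:ℝ) - 2) * t)
        + Real.sin ((a:ℝ) * t) * Real.sin (((a:ℝ) - 2) * t) := by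
    rw [← Real.cos_sub, show (a:ℝ) * t - ((a:ℝ) - 2) * t = 2 * t from by ring]
  have q1 : 0 ≤ β * (α - γ) * (1 + Real.cos (2 * t)) :=
    mul_nonneg (mul_nonneg hβ.le (by linarith)) (by linarith [Real.neg_one_le_cos (2 * t)])
  have q2 : 0 ≤ γ * (α - β) * (1 + Real.cos (((a:ℝ) - 2) * t)) :=
    mul_nonneg (mul_nonneg hγ.le (by linarith)) (by linarith [Real.neg_one_le_cos (((a:ℝ) - 2) * t)])
  have hkey' : (1 - Real.cos (Real.pi / a)) * (β * γ)
      ≤ 2 * (3 + Real.cos (2 * t) + Real.cos (((a:ℝ) - 2) * t) - Real.cos ((a:ℝ) * t)) * (β * γ) :=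
    mul_le_mul_of_nonneg_right hkey (by positivity)
  have hxy : (-α * Real.cos (((a:ℝ) - 2) * t) + β * Real.cos ((a:ℝ) * t) + γ) ^ 2 +
      (α * Real.sin (((a:ℝ) - 2) * t) - β * Real.sin ((a:ℝ) * t)) ^ 2
      = α^2 + β^2 + γ^2 - 2*α*β*Real.cos (2*t) - 2*α*γ*Real.cos (((a:ℝ) - 2) * t)
        + 2*β*γ*Real.cos ((a:ℝ) * t) := by
    linear_combination (α^2) * hp1 + (β^2) * hp2 + (2*α*β) * hcos2
  rw [hxy]
  linarith [q1, q2, hkey']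
end

section
/- Let a ≥ 3 be an odd natural number and let α, β, γ be positive real numbers with α ≥ β and α ≥ γ. Then for every t ∈ ℝ, |−α + β·e^{−2it} + γ·e^{−iat}| ≤ ((α+β+γ)² − (1 − cos(π/a))·βγ)^{1/2}. -/
set_option maxHeartbeats 2000000

open Real Complex

private lemma sin_odd_quarter (n : ℤ) (hn : Odd n) (x : ℝ) (hx : |x| ≤ π/4) :
    Real.sin (π/4 - |x|) ≤ |Real.sin ((n:ℝ)*π/4 + x)| := by
  have hπ := Real.pi_pos
  have hx1 : -(π/4) ≤ x := neg_le_of_abs_le hx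
  have hx2 : x ≤ π/4 := le_of_abs_le hx
  have hx0 : 0 ≤ |x| := _root_.abs_nonneg x
  have hmemA : π/4 - |x| ∈ Set.Icc (-(π/2)) (π/2) := by
    constructor <;> nlinarith
  have hA : Real.sin (π/4 - |x|) ≤ Real.sin (π/4 + x) := by
    apply Real.strictMonoOn_sin.monotoneOn hmemA
    · constructor <;> nlinarith
    · nlinarith [neg_abs_le x]
  have hB : Real.sin (π/4 - |x|) ≤ Real.sin (π/4 - x) := by
    apply Real.strictMonoOn_sin.monotoneOn hmemA
    · constructor <;> nlinarith
    · nlinarith [le_abs_self x]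
  have hAnn : 0 ≤ Real.sin (π/4 + x) :=
    Real.sin_nonneg_of_nonneg_of_le_pi (by nlinarith) (by nlinarith)
  have hBnn : 0 ≤ Real.sin (π/4 - x) :=
    Real.sin_nonneg_of_nonneg_of_le_pi (by nlinarith) (by nlinarith)
  obtain ⟨m, hm⟩ := hn
  have h8 : n % 8 = 1 ∨ n % 8 = 3 ∨ n % 8 = 5 ∨ n % 8 = 7 := by omega
  have hn8 : n = 8 * (n / 8) + n % 8 := by omega
  set j := n / 8 with hj
  have hper : Real.sin ((n:ℝ)*π/4 + x) = Real.sin (((n % 8 : ℤ):ℝ)*π/4 + x) := by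
    have harg : (n:ℝ)*π/4 + x = (((n % 8 : ℤ):ℝ)*π/4 + x) + (j:ℝ)*(2*π) := by
      have : ((n:ℤ):ℝ) = 8*(j:ℝ) + ((n % 8 : ℤ):ℝ) := by exact_mod_cast hn8
      rw [this]; ring
    rw [harg, Real.sin_add_int_mul_two_pi]
  rw [hper]
  rcases h8 with h | h | h | h <;> rw [h]
  · rw [show ((1:ℤ):ℝ)*π/4 + x = π/4 + x by push_cast; ring, _root_.abs_of_nonneg hAnn]
    exact hA
  · rw [show ((3:ℤ):ℝ)*π/4 + x = π - (π/4 - x) by push_cast; ring, Real.sin_pi_sub,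
      _root_.abs_of_nonneg hBnn]
    exact hB
  · rw [show ((5:ℤ):ℝ)*π/4 + x = (π/4 + x) + π by push_cast; ring, Real.sin_add_pi, _root_.abs_neg,
      _root_.abs_of_nonneg hAnn]
    exact hA
  · rw [show ((7:ℤ):ℝ)*π/4 + x = -(π/4 - x) + 2*π by push_cast; ring, Real.sin_add_two_pi,
      Real.sin_neg, _root_.abs_neg, _root_.abs_of_nonneg hBnn]
    exact hB

private lemma key5 (a : ℕ) (ha : 5 ≤ a) (hodd : Odd a) (t : ℝ) :
    Real.sin (π/(2*a))^2 ≤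
      2*(Real.cos t^2 + Real.cos ((a:ℝ)*t/2)^2 + Real.sin ((a:ℝ)*t/2 - t)^2) := by
  have hπ := Real.pi_pos
  have hπ1 : (3.141592:ℝ) < π := Real.pi_gt_d6
  have hπ2 : π < 3.141593 := Real.pi_lt_d6
  have ha5 : (5:ℝ) ≤ (a:ℝ) := by exact_mod_cast ha
  have ha0 : (0:ℝ) < (a:ℝ) := by linarith
  set k := round (t/π - 1/2) with hk
  set u := t - (π/2 + (k:ℝ)*π) with hudef
  have ht : t = u + π/2 + (k:ℝ)*π := by rw [hudef]; ring
  have hu : |u| ≤ π/2 := by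
    have h1 : |t/π - 1/2 - (k:ℝ)| ≤ 1/2 := abs_sub_round _
    have h2 : u = (t/π - 1/2 - (k:ℝ)) * π := by rw [hudef]; field_simp; ring
    rw [h2, _root_.abs_mul, _root_.abs_of_pos hπ]
    nlinarith
  have hcost : Real.cos t ^ 2 = Real.sin u ^ 2 := by
    have h2t : 2*t = (2*u + π) + (k:ℝ)*(2*π) := by rw [ht]; ring
    have hc2 : Real.cos (2*t) = - Real.cos (2*u) := by
      rw [h2t, Real.cos_add_int_mul_two_pi, Real.cos_add_pi]
    have e1 := Real.cos_sq t
    have e2 := Real.cos_sq u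
    have e3 := Real.sin_sq u
    rw [hc2] at e1
    nlinarith
  have htpos : 0 < π/(2*(a:ℝ)) := by positivity
  have hsinlt : Real.sin (π/(2*(a:ℝ))) < π/(2*(a:ℝ)) := Real.sin_lt htpos
  have hsinnn : 0 ≤ Real.sin (π/(2*(a:ℝ))) :=
    Real.sin_nonneg_of_nonneg_of_le_pi (le_of_lt htpos) (by
      rw [div_le_iff₀ (by positivity)]; nlinarith)
  by_cases hd : |u| < 6/(5*(a:ℝ))
  · -- u small : use the two oscillating terms
    have h2k1 : Odd ((a:ℤ)*(2*k+1)) := by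
      have h0 : Odd (a:ℤ) := (Int.odd_coe_nat a).mpr hodd
      exact h0.mul (odd_two_mul_add_one k)
    have h2k2 : Odd (((a:ℤ)-2)*(2*k+1)) := by
      have h1 : Odd ((a:ℤ)-2) := by
        obtain ⟨m, hm⟩ := hodd
        exact ⟨(m:ℤ)-2+1, by push_cast [hm]; ring⟩
      exact h1.mul (odd_two_mul_add_one k)
    have hA2 : |(a:ℝ)*u/2| = (a:ℝ)*|u|/2 := by
      rw [_root_.abs_div, _root_.abs_mul, _root_.abs_of_pos ha0, _root_.abs_of_pos (by norm_num : (0:ℝ) < 2)]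
    have hA1 : |((a:ℝ)-2)*u/2| = ((a:ℝ)-2)*|u|/2 := by
      rw [_root_.abs_div, _root_.abs_mul, _root_.abs_of_nonneg (by linarith : (0:ℝ) ≤ (a:ℝ)-2),
        _root_.abs_of_pos (by norm_num : (0:ℝ) < 2)]
    have haub : (a:ℝ)*|u|/2 < 3/5 := by
      rw [div_lt_iff₀ (by norm_num : (0:ℝ) < 2)]
      calc (a:ℝ)*|u| < (a:ℝ)*(6/(5*(a:ℝ))) := mul_lt_mul_of_pos_left hd ha0
        _ = 6/5 := by field_simp
        _ ≤ 3/5*2 := by norm_num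
    have hau : |(a:ℝ)*u/2| < 3/5 := by rw [hA2]; exact haub
    have hau2 : |((a:ℝ)-2)*u/2| < 3/5 := by
      rw [hA1]; nlinarith [_root_.abs_nonneg u]
    have hq : (3:ℝ)/5 < π/4 := by linarith
    have harg1 : (a:ℝ)*t/2 = (((a:ℤ)*(2*k+1) : ℤ):ℝ)*π/4 + (a:ℝ)*u/2 := by
      rw [ht]; push_cast; ring
    have harg2 : (a:ℝ)*t/2 - t = ((((a:ℤ)-2)*(2*k+1) : ℤ):ℝ)*π/4 + ((a:ℝ)-2)*u/2 := by
      rw [ht]; push_cast; ring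
    have hB2 : Real.sin (π/4 - |((a:ℝ)-2)*u/2|) ≤ |Real.sin ((a:ℝ)*t/2 - t)| := by
      rw [harg2]
      exact sin_odd_quarter _ h2k2 _ (le_of_lt (lt_trans hau2 hq))
    have hB1 : Real.sin (π/4 - |(a:ℝ)*u/2|) ≤ |Real.cos ((a:ℝ)*t/2)| := by
      have hcs : Real.cos ((a:ℝ)*t/2) =
          Real.sin (((2 - (a:ℤ)*(2*k+1) : ℤ):ℝ)*π/4 + (-((a:ℝ)*u/2))) := by
        rw [← Real.sin_pi_div_two_sub, harg1]
        congr 1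
        push_cast; ring
      rw [hcs]
      have hodd' : Odd (2 - (a:ℤ)*(2*k+1)) := by
        obtain ⟨m, hm⟩ := h2k1
        exact ⟨-m, by omega⟩
      have h3 := sin_odd_quarter _ hodd' (-((a:ℝ)*u/2))
        (by rw [_root_.abs_neg]; exact le_of_lt (lt_trans hau hq))
      rwa [_root_.abs_neg] at h3
    have hmono : ∀ y : ℝ, |y| < 3/5 → Real.sin (π/4 - 3/5) ≤ Real.sin (π/4 - |y|) := by
      intro y hy
      apply Real.strictMonoOn_sin.monotoneOn
      · constructor <;> nlinarith
      · constructor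
        · nlinarith [_root_.abs_nonneg y]
        · nlinarith [_root_.abs_nonneg y]
      · nlinarith
    have hs1 := le_trans (hmono _ hau) hB1
    have hs2 := le_trans (hmono _ hau2) hB2
    have hx0 : (0:ℝ) < π/4 - 3/5 := by linarith
    have hx1 : π/4 - 3/5 ≤ 1 := by linarith
    have hcube := Real.sin_gt_sub_cube hx0
    have hxu : π/4 - 3/5 ≤ 0.1854 := by linarith
    have hx3 : (π/4 - 3/5)^3 ≤ 0.1854^3 := pow_le_pow_left₀ (le_of_lt hx0) hxu 3
    have hsnum : (0.1838:ℝ) ≤ Real.sin (π/4 - 3/5) := by nlinarith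
    have habs1 : (0.1838:ℝ) ≤ |Real.cos ((a:ℝ)*t/2)| := le_trans hsnum hs1
    have habs2 : (0.1838:ℝ) ≤ |Real.sin ((a:ℝ)*t/2 - t)| := le_trans hsnum hs2
    have hq1 : (0.1838:ℝ)^2 ≤ Real.cos ((a:ℝ)*t/2)^2 := by
      rw [← _root_.sq_abs (Real.cos ((a:ℝ)*t/2))]
      nlinarith [habs1, _root_.abs_nonneg (Real.cos ((a:ℝ)*t/2))]
    have hq2 : (0.1838:ℝ)^2 ≤ Real.sin ((a:ℝ)*t/2 - t)^2 := by
      rw [← _root_.sq_abs (Real.sin ((a:ℝ)*t/2 - t))]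
      nlinarith [habs2, _root_.abs_nonneg (Real.sin ((a:ℝ)*t/2 - t))]
    have hsmall : π/(2*(a:ℝ)) ≤ π/10 :=
      div_le_div_of_nonneg_left hπ.le (by norm_num) (by linarith)
    have hsb : Real.sin (π/(2*(a:ℝ))) ≤ 0.3141593 := by linarith
    have hstep : Real.sin (π/(2*(a:ℝ)))^2 ≤ (0.3141593:ℝ)^2 := by
      nlinarith [hsb, hsinnn]
    have hnum : (0.3141593:ℝ)^2 ≤ 2*((0.1838:ℝ)^2 + (0.1838:ℝ)^2) := by norm_num
    linarith only [hstep, hnum, hq1, hq2, sq_nonneg (Real.cos t)]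
  · -- u not small
    push_neg at hd
    have h65 : (0:ℝ) < 6/(5*(a:ℝ)) := by positivity
    have h651 : 6/(5*(a:ℝ)) ≤ 6/25 :=
      div_le_div_of_nonneg_left (by norm_num) (by norm_num) (by linarith)
    have hsin_u : Real.sin (6/(5*(a:ℝ))) ≤ |Real.sin u| := by
      have h1 : Real.sin |u| = |Real.sin u| := by
        rcases le_or_gt 0 u with h | h
        · rw [_root_.abs_of_nonneg h,
            _root_.abs_of_nonneg (Real.sin_nonneg_of_nonneg_of_le_pi h (by nlinarith [le_abs_self u]))]
        · have h2 : 0 ≤ Real.sin (-u) :=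
            Real.sin_nonneg_of_nonneg_of_le_pi (by linarith)
              (by nlinarith [le_abs_self (-u), _root_.abs_neg u])
          rw [_root_.abs_of_neg h, show Real.sin u = -Real.sin (-u) by rw [Real.sin_neg]; ring,
            _root_.abs_neg, _root_.abs_of_nonneg h2]
      rw [← h1]
      apply Real.strictMonoOn_sin.monotoneOn
      · constructor <;> nlinarith
      · constructor <;> nlinarith [_root_.abs_nonneg u]
      · exact hd
    have hcube := Real.sin_gt_sub_cube h65
    set v : ℝ := 6/(5*(a:ℝ)) with hv
    have hlb : (1.18272:ℝ)/(a:ℝ) ≤ Real.sin v := by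
      have hveq : (1.18272:ℝ)/(a:ℝ) = v*0.9856 := by rw [hv]; field_simp; ring
      have hv2 : v^2 ≤ (6/25)*v := by nlinarith
      have hv3 : v^3 ≤ (6/25)^2*v := by nlinarith
      rw [hveq]
      nlinarith
    have hP : (1.18272:ℝ)/(a:ℝ) ≤ |Real.sin u| := le_trans hlb hsin_u
    have hcmp : π/(2*(a:ℝ)) ≤ 1.6/(a:ℝ) := by
      rw [div_le_div_iff₀ (by positivity) ha0]
      nlinarith [mul_pos ha0 (show (0:ℝ) < 3.2 - π by linarith)]
    have hQ : Real.sin (π/(2*(a:ℝ))) ≤ 1.6/(a:ℝ) := by linarith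
    have hsq : Real.cos t ^ 2 = |Real.sin u|^2 := by rw [_root_.sq_abs]; exact hcost
    have hia : (0:ℝ) < 1/(a:ℝ) := by positivity
    have hQ2 : Real.sin (π/(2*(a:ℝ)))^2 ≤ (1.6/(a:ℝ))^2 := by
      nlinarith [hQ, hsinnn]
    have hP2 : (1.18272/(a:ℝ))^2 ≤ |Real.sin u|^2 := by
      nlinarith [hP, div_nonneg (by norm_num : (0:ℝ) ≤ 1.18272) ha0.le]
    have hnum : (1.6/(a:ℝ))^2 ≤ 2*(1.18272/(a:ℝ))^2 := by
      have hsq2 : (0:ℝ) < (a:ℝ)^2 := by positivity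
      rw [div_pow, div_pow, ← mul_div_assoc, div_le_div_iff₀ hsq2 hsq2]
      nlinarith [sq_nonneg (a:ℝ)]
    linarith only [hQ2, hP2, hnum, hsq, sq_nonneg (Real.cos ((a:ℝ)*t/2)),
      sq_nonneg (Real.sin ((a:ℝ)*t/2 - t))]

private lemma keyA (a : ℕ) (ha : 3 ≤ a) (hodd : Odd a) (t : ℝ) :
    1 - Real.cos (π/(a:ℝ)) ≤
      2*(1 + Real.cos (2*t)) + 2*(1 + Real.cos ((a:ℝ)*t)) +
        2*(1 - Real.cos ((a:ℝ)*t - 2*t)) := by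
  have ha0 : (0:ℝ) < (a:ℝ) := by positivity
  have e1 : Real.cos (2*t) = 2*Real.cos t^2 - 1 := Real.cos_two_mul t
  have e2 : Real.cos ((a:ℝ)*t) = 2*Real.cos ((a:ℝ)*t/2)^2 - 1 := by
    rw [show (a:ℝ)*t = 2*((a:ℝ)*t/2) by ring, Real.cos_two_mul]
    norm_num
  have e3 : Real.cos ((a:ℝ)*t - 2*t) = 1 - 2*Real.sin ((a:ℝ)*t/2 - t)^2 := by
    rw [show (a:ℝ)*t - 2*t = 2*((a:ℝ)*t/2 - t) by ring, Real.cos_two_mul, Real.cos_sq']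
    ring
  have e4 : Real.cos (π/(a:ℝ)) = 1 - 2*Real.sin (π/(2*(a:ℝ)))^2 := by
    rw [show π/(a:ℝ) = 2*(π/(2*(a:ℝ))) by ring, Real.cos_two_mul, Real.cos_sq']
    ring
  rcases eq_or_lt_of_le ha with h3 | h5
  · -- a = 3
    have h3' : (a:ℝ) = 3 := by exact_mod_cast h3.symm
    rw [e1, e2, e3, e4, h3']
    have hs : Real.sin (π/(2*3))^2 = 1/4 := by
      rw [show π/(2*3) = π/6 by ring, Real.sin_pi_div_six]; norm_num
    have hhalf : Real.sin ((3:ℝ)*t/2 - t)^2 = (1 - Real.cos t)/2 := by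
      have h := Real.cos_two_mul ((3:ℝ)*t/2 - t)
      rw [Real.cos_sq'] at h
      rw [show 2*((3:ℝ)*t/2 - t) = t by ring] at h
      linarith
    rw [show π/(2*(3:ℝ)) = π/(2*3) by norm_num, hs, hhalf]
    nlinarith [sq_nonneg (Real.cos t - 1/4), sq_nonneg (Real.cos ((3:ℝ)*t/2))]
  · have h5' : 5 ≤ a := by
      obtain ⟨m, hm⟩ := hodd; omega
    have := key5 a h5' hodd t
    rw [e1, e2, e3, e4]
    linarith

/-- For odd `a ≥ 3` and positive reals `α ≥ β, γ`, for every `t ∈ ℝ`,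
`|−α + β e^{−2it} + γ e^{−iat}| ≤ ((α+β+γ)² − (1 − cos(π/a)) βγ)^{1/2}`. -/
theorem abs_triple_exp_le' (a : ℕ) (ha : 3 ≤ a) (hodd : Odd a) (α β γ : ℝ)
    (hα : 0 < α) (hβ : 0 < β) (hγ : 0 < γ) (hβα : β ≤ α) (hγα : γ ≤ α) (t : ℝ) :
    ‖(-(α : ℂ) + (β : ℂ) * Complex.exp (-Complex.I * (2 * (t : ℂ))) +
        (γ : ℂ) * Complex.exp (-Complex.I * ((a : ℂ) * (t : ℂ))))‖ ≤
      Real.sqrt ((α + β + γ) ^ 2 - (1 - Real.cos (Real.pi / a)) * (β * γ)) := by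
  have hπ := Real.pi_pos
  have hexp : ∀ x : ℝ, Complex.exp (-Complex.I * (x:ℂ)) =
      Complex.ofReal (Real.cos x) - Complex.ofReal (Real.sin x) * Complex.I := by
    intro x
    rw [show -Complex.I * (x:ℂ) = ((-x:ℝ):ℂ) * Complex.I by push_cast; ring,
      Complex.exp_mul_I, ← Complex.ofReal_cos, ← Complex.ofReal_sin,
      Real.cos_neg, Real.sin_neg]
    push_cast; ring
  have h2 : Complex.exp (-Complex.I * (2 * (t:ℂ))) =
      Complex.ofReal (Real.cos (2*t)) - Complex.ofReal (Real.sin (2*t)) * Complex.I := by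
    rw [show (2 * (t:ℂ)) = (((2*t : ℝ)):ℂ) by push_cast; ring]
    exact hexp (2*t)
  have h3 : Complex.exp (-Complex.I * ((a:ℂ) * (t:ℂ))) =
      Complex.ofReal (Real.cos ((a:ℝ)*t)) - Complex.ofReal (Real.sin ((a:ℝ)*t)) * Complex.I := by
    rw [show ((a:ℂ) * (t:ℂ)) = ((((a:ℝ)*t : ℝ)):ℂ) by push_cast; ring]
    exact hexp ((a:ℝ)*t)
  set c2 := Real.cos (2*t)
  set s2 := Real.sin (2*t)
  set ca := Real.cos ((a:ℝ)*t)
  set sa := Real.sin ((a:ℝ)*t)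
  have hz : (-(α : ℂ) + (β : ℂ) * Complex.exp (-Complex.I * (2 * (t : ℂ))) +
      (γ : ℂ) * Complex.exp (-Complex.I * ((a : ℂ) * (t : ℂ)))) =
      Complex.ofReal (-α + β*c2 + γ*ca) + Complex.ofReal (-(β*s2 + γ*sa)) * Complex.I := by
    rw [h2, h3]; push_cast; ring
  have habs2 : ‖(-(α : ℂ) + (β : ℂ) * Complex.exp (-Complex.I * (2 * (t : ℂ))) +
      (γ : ℂ) * Complex.exp (-Complex.I * ((a : ℂ) * (t : ℂ))))‖ ^ 2 =
      (-α + β*c2 + γ*ca)^2 + (-(β*s2 + γ*sa))^2 := by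
    rw [hz, Complex.sq_norm, Complex.normSq_add_mul_I]
  -- the target is nonneg
  have hkey := keyA a ha hodd t
  have hX : 0 ≤ (α + β + γ) ^ 2 - (1 - Real.cos (π/(a:ℝ))) * (β * γ) := by
    nlinarith [Real.neg_one_le_cos (π/(a:ℝ)), sq_nonneg (β - γ), mul_pos hβ hγ]
  rw [show Real.pi = π from rfl]
  rw [Real.le_sqrt (norm_nonneg _) hX]
  rw [habs2]
  have hcs : Real.cos ((a:ℝ)*t - 2*t) = ca * c2 + sa * s2 := Real.cos_sub ((a:ℝ)*t) (2*t)
  have p2 : β^2*(s2^2 + c2^2) = β^2 := by rw [Real.sin_sq_add_cos_sq]; ring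
  have pa : γ^2*(sa^2 + ca^2) = γ^2 := by rw [Real.sin_sq_add_cos_sq]; ring
  have hb1 : 0 ≤ (α - γ)*β*(1 + c2) := by
    have := Real.neg_one_le_cos (2*t)
    apply mul_nonneg (mul_nonneg (by linarith) hβ.le) (by simp only [c2]; linarith)
  have hb2 : 0 ≤ (α - β)*γ*(1 + ca) := by
    have := Real.neg_one_le_cos ((a:ℝ)*t)
    apply mul_nonneg (mul_nonneg (by linarith) hγ.le) (by simp only [ca]; linarith)
  have hb4 := mul_le_mul_of_nonneg_left hkey (mul_pos hβ hγ).le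
  rw [hcs] at hb4
  nlinarith [hb1, hb2, hb4, p2, pa]
end

section
/- Let k ≥ 1, let m₁,…,m_{2k} be positive integers with m₁ ≥ 2, let G = Γ(m₁,…,m_{2k}) with Laplacian L, and let 2 ≤ j ≤ 2k. Define the n×n matrix P_j entrywise by: (P_j)_{ab} = m_j/(σ_{j−1}σ_j) if a,b ∈ B₁ ∪ ⋯ ∪ B_{j−1}; (P_j)_{ab} = −1/σ_j if exactly one of a,b lies in B₁ ∪ ⋯ ∪ B_{j−1} and the other lies in B_j; (P_j)_{ab} = δ_{ab} − 1/σ_j if a,b ∈ B_j; and (P_j)_{ab} = 0 otherwise. Then P_j is symmetric, P_j² = P_j, and L·P_j = λ·P_j, where λ = λ₀(j) = m_{j+1}+m_{j+3}+⋯+m_{2k} if j is odd and λ = λ₁(j) = σ_j + m_{j+2}+m_{j+4}+⋯+m_{2k} if j is even. -/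
open Finset Matrix

instance (r : ℕ) (m : ℕ → ℕ) : DecidableRel (GammaEven r m).Adj := fun u v =>
  decidable_of_iff (u ≠ v ∧ (max (blk r m (u : ℕ)) (blk r m (v : ℕ))) % 2 = 0) Iff.rfl

/-- `λ₀(j) = m_{j+1} + m_{j+3} + ⋯ + m_{2k}` (the indices run over `j+1, j+3, …`). -/
def lam0 (k : ℕ) (m : ℕ → ℕ) (j : ℕ) : ℕ :=
  ∑ l ∈ (Finset.Icc (j + 1) (2 * k)).filter (fun l => (l - j) % 2 = 1), m l

/-- `λ₁(j) = σ_j + m_{j+2} + m_{j+4} + ⋯ + m_{2k}` (the sum runs over `j+2, j+4, …`). -/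
def lam1 (k : ℕ) (m : ℕ → ℕ) (j : ℕ) : ℕ :=
  sig m j + ∑ l ∈ (Finset.Icc (j + 2) (2 * k)).filter (fun l => (l - j) % 2 = 0), m l


lemma sig_mono (m : ℕ → ℕ) : Monotone (sig m) := by
  intro a b hab
  exact Finset.sum_le_sum_of_subset (Finset.Icc_subset_Icc_right hab)

lemma sig_succ (m : ℕ → ℕ) (l : ℕ) : sig m (l + 1) = sig m l + m (l + 1) :=
  Finset.sum_Icc_succ_top (by omega) m

lemma blk_le_iff (m : ℕ → ℕ) {r l : ℕ} (hl : l ≤ r) (v : ℕ) :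
    blk r m v ≤ l ↔ v < sig m l := by
  constructor
  · intro h
    by_contra hv
    push_neg at hv
    have h1 : 1 ≤ l := by
      rcases Nat.eq_zero_or_pos l with h0 | h1
      · exfalso; unfold blk at h; omega
      · exact h1
    have hsub : Finset.Icc 1 l ⊆ (Finset.Icc 1 r).filter (fun l' => sig m l' ≤ v) := by
      intro x hx
      simp only [Finset.mem_filter, Finset.mem_Icc] at hx ⊢
      exact ⟨⟨hx.1, hx.2.trans hl⟩, le_trans (sig_mono m hx.2) hv⟩
    have := Finset.card_le_card hsub
    rw [Nat.card_Icc] at this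
    unfold blk at h
    omega
  · intro h
    have hsub : (Finset.Icc 1 r).filter (fun l' => sig m l' ≤ v) ⊆ Finset.Icc 1 (l - 1) := by
      intro x hx
      simp only [Finset.mem_filter, Finset.mem_Icc] at hx ⊢
      refine ⟨hx.1.1, ?_⟩
      by_contra hx2
      have : l ≤ x := by omega
      have := sig_mono m this
      omega
    have := Finset.card_le_card hsub
    rw [Nat.card_Icc] at this
    have h0 : sig m 0 = 0 := by simp [sig]
    unfold blk
    rcases Nat.eq_zero_or_pos l with h0' | h0'
    · subst h0'; omega
    · omega

lemma blk_eq_of (m : ℕ → ℕ) {r l : ℕ} (hl1 : 1 ≤ l) (hl : l ≤ r) {v : ℕ}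
    (h1 : sig m (l - 1) ≤ v) (h2 : v < sig m l) : blk r m v = l := by
  have ha : blk r m v ≤ l := (blk_le_iff m hl v).2 h2
  have hb : ¬ blk r m v ≤ l - 1 := by
    rw [blk_le_iff m (by omega) v]; omega
  omega

lemma sum_blk (m : ℕ → ℕ) (g : ℕ → ℝ) (R : ℕ) (t : ℕ) :
    ∀ r, t ≤ r → r ≤ R →
    ∑ i ∈ Finset.Ico (sig m t) (sig m r), g (blk R m i)
      = ∑ l ∈ Finset.Icc (t + 1) r, (m l : ℝ) * g l := by
  intro r
  induction r with
  | zero => intro h1 h2; have : t = 0 := by omega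
            subst this; simp
  | succ r ih =>
    intro h1 h2
    rcases Nat.lt_or_ge t (r+1) with h | h
    · have ht : t ≤ r := by omega
      rw [← Finset.sum_Ico_consecutive (fun i => g (blk R m i))
            (sig_mono m ht) (sig_mono m (Nat.le_succ r)),
          ih ht (by omega), Finset.sum_Icc_succ_top (by omega)]
      congr 1
      have : ∀ i ∈ Finset.Ico (sig m r) (sig m (r+1)), g (blk R m i) = g (r+1) := by
        intro i hi
        simp only [Finset.mem_Ico] at hi
        rw [blk_eq_of m (by omega) (by omega) (by simpa using hi.1) hi.2]
      rw [Finset.sum_congr rfl this, Finset.sum_const, Nat.card_Ico, nsmul_eq_mul]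
      have hss := sig_succ m r
      congr 2
      omega
    · have : t = r + 1 := by omega
      subst this; simp

/-- Blockwise projector entry as a function of numeric vertex labels. -/
noncomputable def pf (s t : ℕ) (c : ℝ) (i q : ℕ) : ℝ :=
  if i < s ∧ q < s then c
  else if (i < s ∧ (s ≤ q ∧ q < t)) ∨ ((s ≤ i ∧ i < t) ∧ q < s) then -(1 / (t : ℝ))
  else if (s ≤ i ∧ i < t) ∧ (s ≤ q ∧ q < t) then (if i = q then 1 else 0) - 1 / (t : ℝ)
  else 0

lemma pf_symm (s t : ℕ) (c : ℝ) (i q : ℕ) : pf s t c i q = pf s t c q i := by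
  unfold pf
  split_ifs <;> first | rfl | (exfalso; omega) | (simp_all [eq_comm])

noncomputable def cv1 (s t : ℕ) (c : ℝ) (q : ℕ) : ℝ :=
  if q < s then c else if q < t then -(1 / (t : ℝ)) else 0

noncomputable def cv2 (t : ℕ) (q : ℕ) : ℝ :=
  if q < t then -(1 / (t : ℝ)) else 0

lemma pf_row1 (s t : ℕ) (c : ℝ) {i : ℕ} (q : ℕ) (hi : i < s) :
    pf s t c i q = cv1 s t c q := by
  unfold pf cv1
  split_ifs <;> first | rfl | (exfalso; omega)

lemma pf_row2 (s t : ℕ) (c : ℝ) {i : ℕ} (q : ℕ) (hi1 : s ≤ i) (hi2 : i < t) :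
    pf s t c i q = cv2 t q + (if i = q then 1 else 0) := by
  unfold pf cv2
  split_ifs <;> first | ring1 | (exfalso; omega)

lemma pf_row3 (s t : ℕ) (c : ℝ) {i : ℕ} (q : ℕ) (hst : s ≤ t) (hi : t ≤ i) :
    pf s t c i q = 0 := by
  unfold pf
  split_ifs <;> first | rfl | (exfalso; omega)

lemma pf_bracket (s t : ℕ) (c : ℝ) (hs : 0 < s) (hst : s < t)
    (hc : c = ((t : ℝ) - (s : ℝ)) / ((s : ℝ) * (t : ℝ))) (q : ℕ) :
    (s : ℝ) * cv1 s t c q + ((t : ℝ) - (s : ℝ)) * cv2 t q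
      + (if s ≤ q ∧ q < t then (1:ℝ) else 0) = 0 := by
  have hs' : (0:ℝ) < (s:ℝ) := by exact_mod_cast hs
  have ht0 : 0 < t := hs.trans hst
  have ht' : (0:ℝ) < (t:ℝ) := by exact_mod_cast ht0
  unfold cv1 cv2
  split_ifs <;> first | (exfalso; omega) | (subst hc; field_simp; try ring1) | simp

set_option maxHeartbeats 1000000 in
lemma pf_idem (s t nn : ℕ) (hs : 0 < s) (hst : s < t) (htn : t ≤ nn) (c : ℝ)
    (hc : c = ((t : ℝ) - (s : ℝ)) / ((s : ℝ) * (t : ℝ))) (p q : ℕ) :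
    ∑ i ∈ Finset.range nn, pf s t c p i * pf s t c i q = pf s t c p q := by
  have hs' : (0:ℝ) < (s:ℝ) := by exact_mod_cast hs
  have ht0 : 0 < t := hs.trans hst
  have ht' : (0:ℝ) < (t:ℝ) := by exact_mod_cast ht0
  have hst' : (s:ℝ) < (t:ℝ) := by exact_mod_cast hst
  rw [Finset.range_eq_Ico,
      ← Finset.sum_Ico_consecutive _ (Nat.zero_le t) htn,
      ← Finset.sum_Ico_consecutive _ (Nat.zero_le s) hst.le]
  have h3 : ∑ i ∈ Finset.Ico t nn, pf s t c p i * pf s t c i q = 0 := by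
    apply Finset.sum_eq_zero
    intro i hi
    rw [pf_row3 s t c q hst.le (Finset.mem_Ico.1 hi).1, mul_zero]
  have h1 : ∑ i ∈ Finset.Ico 0 s, pf s t c p i * pf s t c i q
      = (s : ℝ) * (cv1 s t c p * cv1 s t c q) := by
    rw [Finset.sum_congr rfl (fun i hi => ?_), Finset.sum_const, Nat.card_Ico,
        Nat.sub_zero, nsmul_eq_mul]
    have hi' : i < s := (Finset.mem_Ico.1 hi).2
    rw [pf_symm s t c p i, pf_row1 s t c p hi', pf_row1 s t c q hi']
  have h2 : ∑ i ∈ Finset.Ico s t, pf s t c p i * pf s t c i q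
      = ((t : ℝ) - (s : ℝ)) * (cv2 t p * cv2 t q)
        + (if q ∈ Finset.Ico s t then cv2 t p else 0)
        + (if p ∈ Finset.Ico s t then cv2 t q else 0)
        + (if p ∈ Finset.Ico s t then (if p = q then (1:ℝ) else 0) else 0) := by
    have e2 : ∀ i ∈ Finset.Ico s t, pf s t c p i * pf s t c i q
        = cv2 t p * cv2 t q
          + (if i = q then cv2 t p else 0)
          + (if i = p then cv2 t q else 0)
          + (if i = p then (if p = q then (1:ℝ) else 0) else 0) := by
      intro i hi
      rw [Finset.mem_Ico] at hi
      rw [pf_symm s t c p i, pf_row2 s t c p hi.1 hi.2, pf_row2 s t c q hi.1 hi.2]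
      split_ifs <;> first | ring1 | (exfalso; omega)
    rw [Finset.sum_congr rfl e2]
    rw [Finset.sum_add_distrib, Finset.sum_add_distrib, Finset.sum_add_distrib,
        Finset.sum_const, Finset.sum_ite_eq' _ q, Finset.sum_ite_eq' _ p,
        Finset.sum_ite_eq' _ p, Nat.card_Ico, nsmul_eq_mul]
    push_cast [Nat.cast_sub hst.le]
    ring
  rw [h1, h2, h3, add_zero]
  simp only [Finset.mem_Ico]
  unfold cv1 cv2 pf
  subst hc
  split_ifs <;> first | (exfalso; omega) | (field_simp; try ring1)

lemma lam_eq (k : ℕ) (m : ℕ → ℕ) (j : ℕ) :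
    (if Odd j then lam0 k m j else lam1 k m j)
      = (if j % 2 = 0 then sig m j else 0)
        + ∑ l ∈ Finset.Icc (j + 1) (2 * k), (if l % 2 = 0 then m l else 0) := by
  rcases Nat.even_or_odd j with he | ho
  · have hoj : ¬ Odd j := by simp [Nat.not_odd_iff_even.2 he]
    have hj0 : j % 2 = 0 := Nat.even_iff.1 he
    rw [if_neg hoj, if_pos hj0]
    unfold lam1
    congr 1
    rw [Finset.sum_filter]
    rcases Nat.lt_or_ge j (2 * k) with h | h
    · have h1 : Finset.Icc (j+1) (2*k) = Finset.Ico (j+1) (2*k+1) := by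
        rw [Finset.Ico_add_one_right_eq_Icc]
      have h2 : Finset.Icc (j+2) (2*k) = Finset.Ico (j+2) (2*k+1) := by
        rw [Finset.Ico_add_one_right_eq_Icc]
      rw [h1, h2, Finset.sum_eq_sum_Ico_succ_bot (by omega)
            (fun l => if l % 2 = 0 then m l else 0)]
      rw [if_neg (by omega), zero_add]
      apply Finset.sum_congr rfl
      intro l hl
      rw [Finset.mem_Ico] at hl
      have : (l - j) % 2 = 0 ↔ l % 2 = 0 := by omega
      simp [this]
    · have h1 : Finset.Icc (j+1) (2*k) = ∅ := by
        apply Finset.Icc_eq_empty; omega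
      have h2 : Finset.Icc (j+2) (2*k) = ∅ := by
        apply Finset.Icc_eq_empty; omega
      rw [h1, h2]; simp
  · have hj0 : ¬ j % 2 = 0 := by
      rw [Nat.odd_iff] at ho; omega
    rw [if_pos ho, if_neg hj0, zero_add]
    unfold lam0
    rw [Finset.sum_filter]
    apply Finset.sum_congr rfl
    intro l hl
    rw [Finset.mem_Icc] at hl
    rw [Nat.odd_iff] at ho
    have : (l - j) % 2 = 1 ↔ l % 2 = 0 := by omega
    simp [this]

/-- For `G = Γ(m₁,…,m_{2k})` with Laplacian `L` and `2 ≤ j ≤ 2k`, the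
matrix `P_j` defined blockwise below is symmetric, idempotent, and satisfies
`L·P_j = λ·P_j` with `λ = λ₀(j)` for odd `j` and `λ = λ₁(j)` for even `j`. -/
theorem projector_blockwise (k : ℕ) (hk : 1 ≤ k) (m : ℕ → ℕ)
    (hm : ∀ i, 1 ≤ i → i ≤ 2 * k → 1 ≤ m i) (hm1 : 2 ≤ m 1)
    (j : ℕ) (hj1 : 2 ≤ j) (hj2 : j ≤ 2 * k)
    (P : Matrix (Fin (sig m (2 * k))) (Fin (sig m (2 * k))) ℝ)
    (hP : ∀ a b : Fin (sig m (2 * k)), P a b =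
      if blk (2 * k) m (a : ℕ) < j ∧ blk (2 * k) m (b : ℕ) < j then
        (m j : ℝ) / ((sig m (j - 1) : ℝ) * (sig m j : ℝ))
      else if (blk (2 * k) m (a : ℕ) < j ∧ blk (2 * k) m (b : ℕ) = j) ∨
              (blk (2 * k) m (a : ℕ) = j ∧ blk (2 * k) m (b : ℕ) < j) then
        -(1 / (sig m j : ℝ))
      else if blk (2 * k) m (a : ℕ) = j ∧ blk (2 * k) m (b : ℕ) = j then
        (if a = b then 1 else 0) - 1 / (sig m j : ℝ)
      else 0) :
    P.IsSymm ∧ P * P = P ∧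
      (GammaEven (2 * k) m).lapMatrix ℝ * P =
        (((if Odd j then lam0 k m j else lam1 k m j : ℕ) : ℝ)) • P := by
  have hmj : 1 ≤ m j := hm j (by omega) hj2
  have hs1 : sig m 1 = m 1 := by simp [sig]
  have hs0 : 0 < (sig m (j - 1)) := by
    have h := sig_mono m (show 1 ≤ j - 1 by omega)
    omega
  have hts : (sig m j) = (sig m (j - 1)) + m j := by
    have h := sig_succ m (j - 1)
    have h2 : j - 1 + 1 = j := by omega
    rwa [h2] at h
  have hst : (sig m (j - 1)) < (sig m j) := by omega
  have htn : (sig m j) ≤ (sig m (2 * k)) := sig_mono m hj2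
  have hc : ((m j : ℝ) / ((sig m (j - 1) : ℝ) * (sig m j : ℝ))) = (((sig m j) : ℝ) - ((sig m (j - 1)) : ℝ)) / (((sig m (j - 1)) : ℝ) * ((sig m j) : ℝ)) := by
    congr 1
    have : ((sig m j) : ℝ) = ((sig m (j - 1)) : ℝ) + (m j : ℝ) := by exact_mod_cast hts
    rw [this]; ring
  have hlt : ∀ v : ℕ, (blk (2 * k) m v < j ↔ v < (sig m (j - 1))) := by
    intro v
    have h := blk_le_iff m (show j - 1 ≤ 2 * k by omega) v
    omega
  have heq : ∀ v : ℕ, (blk (2 * k) m v = j ↔ (sig m (j - 1)) ≤ v ∧ v < (sig m j)) := by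
    intro v
    have h1 := blk_le_iff m (show j - 1 ≤ 2 * k by omega) v
    have h2 := blk_le_iff m hj2 v
    omega
  have hP' : ∀ a b : Fin (sig m (2 * k)), P a b = pf (sig m (j - 1)) (sig m j) ((m j : ℝ) / ((sig m (j - 1) : ℝ) * (sig m j : ℝ))) (a : ℕ) (b : ℕ) := by
    intro a b
    rw [hP]
    unfold pf
    simp only [hlt, heq, ← Fin.val_inj]
  refine ⟨?_, ?_, ?_⟩
  · apply Matrix.IsSymm.ext
    intro a b
    rw [hP' b a, hP' a b, pf_symm]
  · ext a b
    rw [Matrix.mul_apply]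
    rw [Finset.sum_congr rfl fun u _ => by rw [hP' a u, hP' u b], hP' a b]
    rw [show (∑ u : Fin (sig m (2 * k)), pf (sig m (j - 1)) (sig m j) ((m j : ℝ) / ((sig m (j - 1) : ℝ) * (sig m j : ℝ))) (↑a : ℕ) (↑u : ℕ) * pf (sig m (j - 1)) (sig m j) ((m j : ℝ) / ((sig m (j - 1) : ℝ) * (sig m j : ℝ))) (↑u : ℕ) (↑b : ℕ))
          = ∑ i ∈ Finset.range (sig m (2 * k)), pf (sig m (j - 1)) (sig m j) ((m j : ℝ) / ((sig m (j - 1) : ℝ) * (sig m j : ℝ))) (↑a : ℕ) i * pf (sig m (j - 1)) (sig m j) ((m j : ℝ) / ((sig m (j - 1) : ℝ) * (sig m j : ℝ))) i (↑b : ℕ)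
        from Fin.sum_univ_eq_sum_range (fun i => pf (sig m (j - 1)) (sig m j) ((m j : ℝ) / ((sig m (j - 1) : ℝ) * (sig m j : ℝ))) (↑a : ℕ) i * pf (sig m (j - 1)) (sig m j) ((m j : ℝ) / ((sig m (j - 1) : ℝ) * (sig m j : ℝ))) i (↑b : ℕ)) _]
    exact pf_idem (sig m (j - 1)) (sig m j) (sig m (2 * k)) hs0 hst htn ((m j : ℝ) / ((sig m (j - 1) : ℝ) * (sig m j : ℝ))) hc (↑a : ℕ) (↑b : ℕ)
  · ext a b
    rw [Matrix.smul_apply, smul_eq_mul, Matrix.mul_apply]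
    have hA : ∀ u, ((GammaEven (2 * k) m).lapMatrix ℝ) a u * P u b
        = (if a = u then (((GammaEven (2 * k) m).degree a : ℝ)) else 0) * P u b
          - (if (GammaEven (2 * k) m).Adj a u then (1:ℝ) else 0) * P u b := by
      intro u
      rw [SimpleGraph.lapMatrix, Matrix.sub_apply, SimpleGraph.degMatrix,
          Matrix.diagonal_apply, SimpleGraph.adjMatrix_apply, sub_mul]
    rw [Finset.sum_congr rfl fun u _ => hA u, Finset.sum_sub_distrib]
    have hdeg : ∑ u, (if a = u then (((GammaEven (2 * k) m).degree a : ℝ)) else 0) * P u b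
        = ((GammaEven (2 * k) m).degree a : ℝ) * P a b := by
      simp only [ite_mul, zero_mul]
      rw [Finset.sum_ite_eq]
      simp
    rw [hdeg, SimpleGraph.degree_eq_sum_if_adj, Finset.sum_mul, ← Finset.sum_sub_distrib]
    have hQ : ∀ u : Fin (sig m (2 * k)),
        (if (GammaEven (2 * k) m).Adj a u then (1:ℝ) else 0) * P a b
          - (if (GammaEven (2 * k) m).Adj a u then (1:ℝ) else 0) * P u b
        = (if max (blk (2 * k) m (↑a : ℕ)) (blk (2 * k) m (↑u : ℕ)) % 2 = 0 then (1:ℝ) else 0)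
            * (pf (sig m (j - 1)) (sig m j) ((m j : ℝ) / ((sig m (j - 1) : ℝ) * (sig m j : ℝ))) (↑a : ℕ) (↑b : ℕ) - pf (sig m (j - 1)) (sig m j) ((m j : ℝ) / ((sig m (j - 1) : ℝ) * (sig m j : ℝ))) (↑u : ℕ) (↑b : ℕ)) := by
      intro u
      rw [← mul_sub, hP' a b, hP' u b]
      by_cases hu : u = a
      · subst hu; rw [sub_self, mul_zero, mul_zero]
      · congr 1
        apply if_congr _ rfl rfl
        constructor
        · exact fun h => h.2
        · exact fun h => ⟨fun h' => hu h'.symm, h⟩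
    rw [Finset.sum_congr rfl fun u _ => hQ u]
    rw [show (∑ u : Fin (sig m (2 * k)),
          (if max (blk (2 * k) m (↑a : ℕ)) (blk (2 * k) m (↑u : ℕ)) % 2 = 0 then (1:ℝ) else 0)
            * (pf (sig m (j - 1)) (sig m j) ((m j : ℝ) / ((sig m (j - 1) : ℝ) * (sig m j : ℝ))) (↑a : ℕ) (↑b : ℕ) - pf (sig m (j - 1)) (sig m j) ((m j : ℝ) / ((sig m (j - 1) : ℝ) * (sig m j : ℝ))) (↑u : ℕ) (↑b : ℕ)))
          = ∑ i ∈ Finset.range (sig m (2 * k)), (if max (blk (2 * k) m (↑a : ℕ)) (blk (2 * k) m i) % 2 = 0 then (1:ℝ) else 0)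
            * (pf (sig m (j - 1)) (sig m j) ((m j : ℝ) / ((sig m (j - 1) : ℝ) * (sig m j : ℝ))) (↑a : ℕ) (↑b : ℕ) - pf (sig m (j - 1)) (sig m j) ((m j : ℝ) / ((sig m (j - 1) : ℝ) * (sig m j : ℝ))) i (↑b : ℕ))
        from Fin.sum_univ_eq_sum_range (fun i => (if max (blk (2 * k) m (↑a : ℕ)) (blk (2 * k) m i) % 2 = 0 then (1:ℝ) else 0) * (pf (sig m (j - 1)) (sig m j) ((m j : ℝ) / ((sig m (j - 1) : ℝ) * (sig m j : ℝ))) (↑a : ℕ) (↑b : ℕ) - pf (sig m (j - 1)) (sig m j) ((m j : ℝ) / ((sig m (j - 1) : ℝ) * (sig m j : ℝ))) i (↑b : ℕ))) _,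
        Finset.range_eq_Ico,
        ← Finset.sum_Ico_consecutive _ (Nat.zero_le (sig m j)) htn,
        ← Finset.sum_Ico_consecutive _ (Nat.zero_le (sig m (j - 1))) hst.le,
        hP' a b]
    have hbr := pf_bracket (sig m (j - 1)) (sig m j) ((m j : ℝ) / ((sig m (j - 1) : ℝ) * (sig m j : ℝ))) hs0 hst hc (↑b : ℕ)
    have hlam : ((if Odd j then lam0 k m j else lam1 k m j : ℕ) : ℝ)
        = (if j % 2 = 0 then ((sig m j) : ℝ) else 0) + (∑ l ∈ Finset.Icc (j + 1) (2 * k), (m l : ℝ) * (if l % 2 = 0 then (1:ℝ) else 0)) := by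
      rw [lam_eq k m j]
      push_cast [apply_ite (Nat.cast : ℕ → ℝ)]
      congr 1
      apply Finset.sum_congr rfl
      intro l _
      split_ifs <;> simp
    rw [hlam]
    rcases Nat.lt_or_ge (↑a : ℕ) (sig m (j - 1)) with ha1 | ha1
    · -- a in the first region
      have hba : blk (2 * k) m (↑a : ℕ) < j := (hlt (↑a : ℕ)).2 ha1
      have hpfa : pf (sig m (j - 1)) (sig m j) ((m j : ℝ) / ((sig m (j - 1) : ℝ) * (sig m j : ℝ))) (↑a : ℕ) (↑b : ℕ) = cv1 (sig m (j - 1)) (sig m j) ((m j : ℝ) / ((sig m (j - 1) : ℝ) * (sig m j : ℝ))) (↑b : ℕ) := pf_row1 _ _ _ _ ha1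
      have hS1 : ∑ i ∈ Finset.Ico 0 (sig m (j - 1)), (if max (blk (2 * k) m (↑a : ℕ)) (blk (2 * k) m i) % 2 = 0 then (1:ℝ) else 0)
            * (pf (sig m (j - 1)) (sig m j) ((m j : ℝ) / ((sig m (j - 1) : ℝ) * (sig m j : ℝ))) (↑a : ℕ) (↑b : ℕ) - pf (sig m (j - 1)) (sig m j) ((m j : ℝ) / ((sig m (j - 1) : ℝ) * (sig m j : ℝ))) i (↑b : ℕ)) = 0 := by
        apply Finset.sum_eq_zero
        intro i hi
        rw [hpfa, pf_row1 _ _ _ _ (Finset.mem_Ico.1 hi).2, sub_self, mul_zero]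
      have hS2 : ∑ i ∈ Finset.Ico (sig m (j - 1)) (sig m j), (if max (blk (2 * k) m (↑a : ℕ)) (blk (2 * k) m i) % 2 = 0 then (1:ℝ) else 0)
            * (pf (sig m (j - 1)) (sig m j) ((m j : ℝ) / ((sig m (j - 1) : ℝ) * (sig m j : ℝ))) (↑a : ℕ) (↑b : ℕ) - pf (sig m (j - 1)) (sig m j) ((m j : ℝ) / ((sig m (j - 1) : ℝ) * (sig m j : ℝ))) i (↑b : ℕ))
          = (((sig m j) : ℝ) - ((sig m (j - 1)) : ℝ)) * ((if j % 2 = 0 then (1:ℝ) else 0) * (cv1 (sig m (j - 1)) (sig m j) ((m j : ℝ) / ((sig m (j - 1) : ℝ) * (sig m j : ℝ))) (↑b : ℕ) - cv2 (sig m j) (↑b : ℕ)))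
            - (if (sig m (j - 1)) ≤ (↑b : ℕ) ∧ (↑b : ℕ) < (sig m j) then (1:ℝ) else 0) * (if j % 2 = 0 then (1:ℝ) else 0) := by
        have e2 : ∀ i ∈ Finset.Ico (sig m (j - 1)) (sig m j), (if max (blk (2 * k) m (↑a : ℕ)) (blk (2 * k) m i) % 2 = 0 then (1:ℝ) else 0)
              * (pf (sig m (j - 1)) (sig m j) ((m j : ℝ) / ((sig m (j - 1) : ℝ) * (sig m j : ℝ))) (↑a : ℕ) (↑b : ℕ) - pf (sig m (j - 1)) (sig m j) ((m j : ℝ) / ((sig m (j - 1) : ℝ) * (sig m j : ℝ))) i (↑b : ℕ))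
            = (if j % 2 = 0 then (1:ℝ) else 0) * (cv1 (sig m (j - 1)) (sig m j) ((m j : ℝ) / ((sig m (j - 1) : ℝ) * (sig m j : ℝ))) (↑b : ℕ) - cv2 (sig m j) (↑b : ℕ))
              - (if i = (↑b : ℕ) then (if j % 2 = 0 then (1:ℝ) else 0) else 0) := by
          intro i hi
          rw [Finset.mem_Ico] at hi
          have hbi : blk (2 * k) m i = j := (heq i).2 hi
          rw [hbi, hpfa, pf_row2 _ _ _ _ hi.1 hi.2, max_eq_right (by omega)]
          split_ifs <;> ring1
        rw [Finset.sum_congr rfl e2, Finset.sum_sub_distrib, Finset.sum_const,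
            Nat.card_Ico, nsmul_eq_mul, Finset.sum_ite_eq' (Finset.Ico (sig m (j - 1)) (sig m j)) (↑b : ℕ)]
        simp only [Finset.mem_Ico]
        push_cast [Nat.cast_sub hst.le]
        split_ifs <;> ring1
      have hS3 : ∑ i ∈ Finset.Ico (sig m j) (sig m (2 * k)), (if max (blk (2 * k) m (↑a : ℕ)) (blk (2 * k) m i) % 2 = 0 then (1:ℝ) else 0)
            * (pf (sig m (j - 1)) (sig m j) ((m j : ℝ) / ((sig m (j - 1) : ℝ) * (sig m j : ℝ))) (↑a : ℕ) (↑b : ℕ) - pf (sig m (j - 1)) (sig m j) ((m j : ℝ) / ((sig m (j - 1) : ℝ) * (sig m j : ℝ))) i (↑b : ℕ))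
          = (∑ l ∈ Finset.Icc (j + 1) (2 * k), (m l : ℝ) * (if l % 2 = 0 then (1:ℝ) else 0)) * (pf (sig m (j - 1)) (sig m j) ((m j : ℝ) / ((sig m (j - 1) : ℝ) * (sig m j : ℝ))) (↑a : ℕ) (↑b : ℕ)) := by
        have e3 : ∀ i ∈ Finset.Ico (sig m j) (sig m (2 * k)), (if max (blk (2 * k) m (↑a : ℕ)) (blk (2 * k) m i) % 2 = 0 then (1:ℝ) else 0)
              * (pf (sig m (j - 1)) (sig m j) ((m j : ℝ) / ((sig m (j - 1) : ℝ) * (sig m j : ℝ))) (↑a : ℕ) (↑b : ℕ) - pf (sig m (j - 1)) (sig m j) ((m j : ℝ) / ((sig m (j - 1) : ℝ) * (sig m j : ℝ))) i (↑b : ℕ))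
            = (fun l => (if l % 2 = 0 then (1:ℝ) else 0)) (blk (2 * k) m i)
                * (pf (sig m (j - 1)) (sig m j) ((m j : ℝ) / ((sig m (j - 1) : ℝ) * (sig m j : ℝ))) (↑a : ℕ) (↑b : ℕ)) := by
          intro i hi
          rw [Finset.mem_Ico] at hi
          have hbig : ¬ blk (2 * k) m i ≤ j := by
            rw [blk_le_iff m hj2 i]; omega
          rw [pf_row3 _ _ _ _ hst.le hi.1, sub_zero, max_eq_right (by omega)]
        rw [Finset.sum_congr rfl e3, ← Finset.sum_mul,
            sum_blk m (fun l => (if l % 2 = 0 then (1:ℝ) else 0)) (2 * k) j (2 * k) hj2 le_rfl]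
      rw [hS1, hS2, hS3, hpfa]
      by_cases hpar : j % 2 = 0
      · simp only [if_pos hpar]
        linear_combination -hbr
      · simp only [if_neg hpar]
        ring1
    · rcases Nat.lt_or_ge (↑a : ℕ) (sig m j) with ha2 | ha2
      · -- a in the middle region
        have hba : blk (2 * k) m (↑a : ℕ) = j := (heq (↑a : ℕ)).2 ⟨ha1, ha2⟩
        have hS1 : ∑ i ∈ Finset.Ico 0 (sig m (j - 1)), (if max (blk (2 * k) m (↑a : ℕ)) (blk (2 * k) m i) % 2 = 0 then (1:ℝ) else 0)
              * (pf (sig m (j - 1)) (sig m j) ((m j : ℝ) / ((sig m (j - 1) : ℝ) * (sig m j : ℝ))) (↑a : ℕ) (↑b : ℕ) - pf (sig m (j - 1)) (sig m j) ((m j : ℝ) / ((sig m (j - 1) : ℝ) * (sig m j : ℝ))) i (↑b : ℕ))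
            = ((sig m (j - 1)) : ℝ) * ((if j % 2 = 0 then (1:ℝ) else 0) * (pf (sig m (j - 1)) (sig m j) ((m j : ℝ) / ((sig m (j - 1) : ℝ) * (sig m j : ℝ))) (↑a : ℕ) (↑b : ℕ) - cv1 (sig m (j - 1)) (sig m j) ((m j : ℝ) / ((sig m (j - 1) : ℝ) * (sig m j : ℝ))) (↑b : ℕ))) := by
          have e1 : ∀ i ∈ Finset.Ico 0 (sig m (j - 1)), (if max (blk (2 * k) m (↑a : ℕ)) (blk (2 * k) m i) % 2 = 0 then (1:ℝ) else 0)
                * (pf (sig m (j - 1)) (sig m j) ((m j : ℝ) / ((sig m (j - 1) : ℝ) * (sig m j : ℝ))) (↑a : ℕ) (↑b : ℕ) - pf (sig m (j - 1)) (sig m j) ((m j : ℝ) / ((sig m (j - 1) : ℝ) * (sig m j : ℝ))) i (↑b : ℕ))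
              = (if j % 2 = 0 then (1:ℝ) else 0) * (pf (sig m (j - 1)) (sig m j) ((m j : ℝ) / ((sig m (j - 1) : ℝ) * (sig m j : ℝ))) (↑a : ℕ) (↑b : ℕ) - cv1 (sig m (j - 1)) (sig m j) ((m j : ℝ) / ((sig m (j - 1) : ℝ) * (sig m j : ℝ))) (↑b : ℕ)) := by
            intro i hi
            have hbi : blk (2 * k) m i < j := (hlt i).2 (Finset.mem_Ico.1 hi).2
            rw [pf_row1 _ _ _ _ (Finset.mem_Ico.1 hi).2, hba, max_eq_left (by omega)]
          rw [Finset.sum_congr rfl e1, Finset.sum_const, Nat.card_Ico, Nat.sub_zero,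
              nsmul_eq_mul]
        have hS2 : ∑ i ∈ Finset.Ico (sig m (j - 1)) (sig m j), (if max (blk (2 * k) m (↑a : ℕ)) (blk (2 * k) m i) % 2 = 0 then (1:ℝ) else 0)
              * (pf (sig m (j - 1)) (sig m j) ((m j : ℝ) / ((sig m (j - 1) : ℝ) * (sig m j : ℝ))) (↑a : ℕ) (↑b : ℕ) - pf (sig m (j - 1)) (sig m j) ((m j : ℝ) / ((sig m (j - 1) : ℝ) * (sig m j : ℝ))) i (↑b : ℕ))
            = (((sig m j) : ℝ) - ((sig m (j - 1)) : ℝ)) * ((if j % 2 = 0 then (1:ℝ) else 0) * (pf (sig m (j - 1)) (sig m j) ((m j : ℝ) / ((sig m (j - 1) : ℝ) * (sig m j : ℝ))) (↑a : ℕ) (↑b : ℕ) - cv2 (sig m j) (↑b : ℕ)))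
              - (if (sig m (j - 1)) ≤ (↑b : ℕ) ∧ (↑b : ℕ) < (sig m j) then (1:ℝ) else 0) * (if j % 2 = 0 then (1:ℝ) else 0) := by
          have e2 : ∀ i ∈ Finset.Ico (sig m (j - 1)) (sig m j), (if max (blk (2 * k) m (↑a : ℕ)) (blk (2 * k) m i) % 2 = 0 then (1:ℝ) else 0)
                * (pf (sig m (j - 1)) (sig m j) ((m j : ℝ) / ((sig m (j - 1) : ℝ) * (sig m j : ℝ))) (↑a : ℕ) (↑b : ℕ) - pf (sig m (j - 1)) (sig m j) ((m j : ℝ) / ((sig m (j - 1) : ℝ) * (sig m j : ℝ))) i (↑b : ℕ))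
              = (if j % 2 = 0 then (1:ℝ) else 0) * (pf (sig m (j - 1)) (sig m j) ((m j : ℝ) / ((sig m (j - 1) : ℝ) * (sig m j : ℝ))) (↑a : ℕ) (↑b : ℕ) - cv2 (sig m j) (↑b : ℕ))
                - (if i = (↑b : ℕ) then (if j % 2 = 0 then (1:ℝ) else 0) else 0) := by
            intro i hi
            rw [Finset.mem_Ico] at hi
            have hbi : blk (2 * k) m i = j := (heq i).2 hi
            rw [hbi, pf_row2 _ _ _ _ hi.1 hi.2, hba, max_self]
            split_ifs <;> ring1
          rw [Finset.sum_congr rfl e2, Finset.sum_sub_distrib, Finset.sum_const,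
              Nat.card_Ico, nsmul_eq_mul, Finset.sum_ite_eq' (Finset.Ico (sig m (j - 1)) (sig m j)) (↑b : ℕ)]
          simp only [Finset.mem_Ico]
          push_cast [Nat.cast_sub hst.le]
          split_ifs <;> ring1
        have hS3 : ∑ i ∈ Finset.Ico (sig m j) (sig m (2 * k)), (if max (blk (2 * k) m (↑a : ℕ)) (blk (2 * k) m i) % 2 = 0 then (1:ℝ) else 0)
              * (pf (sig m (j - 1)) (sig m j) ((m j : ℝ) / ((sig m (j - 1) : ℝ) * (sig m j : ℝ))) (↑a : ℕ) (↑b : ℕ) - pf (sig m (j - 1)) (sig m j) ((m j : ℝ) / ((sig m (j - 1) : ℝ) * (sig m j : ℝ))) i (↑b : ℕ))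
            = (∑ l ∈ Finset.Icc (j + 1) (2 * k), (m l : ℝ) * (if l % 2 = 0 then (1:ℝ) else 0)) * (pf (sig m (j - 1)) (sig m j) ((m j : ℝ) / ((sig m (j - 1) : ℝ) * (sig m j : ℝ))) (↑a : ℕ) (↑b : ℕ)) := by
          have e3 : ∀ i ∈ Finset.Ico (sig m j) (sig m (2 * k)), (if max (blk (2 * k) m (↑a : ℕ)) (blk (2 * k) m i) % 2 = 0 then (1:ℝ) else 0)
                * (pf (sig m (j - 1)) (sig m j) ((m j : ℝ) / ((sig m (j - 1) : ℝ) * (sig m j : ℝ))) (↑a : ℕ) (↑b : ℕ) - pf (sig m (j - 1)) (sig m j) ((m j : ℝ) / ((sig m (j - 1) : ℝ) * (sig m j : ℝ))) i (↑b : ℕ))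
              = (fun l => (if l % 2 = 0 then (1:ℝ) else 0)) (blk (2 * k) m i)
                  * (pf (sig m (j - 1)) (sig m j) ((m j : ℝ) / ((sig m (j - 1) : ℝ) * (sig m j : ℝ))) (↑a : ℕ) (↑b : ℕ)) := by
            intro i hi
            rw [Finset.mem_Ico] at hi
            have hbig : ¬ blk (2 * k) m i ≤ j := by
              rw [blk_le_iff m hj2 i]; omega
            rw [pf_row3 _ _ _ _ hst.le hi.1, sub_zero, max_eq_right (by omega)]
          rw [Finset.sum_congr rfl e3, ← Finset.sum_mul,
              sum_blk m (fun l => (if l % 2 = 0 then (1:ℝ) else 0)) (2 * k) j (2 * k) hj2 le_rfl]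
        rw [hS1, hS2, hS3]
        by_cases hpar : j % 2 = 0
        · simp only [if_pos hpar]
          linear_combination -hbr
        · simp only [if_neg hpar]
          ring1
      · -- a in the last region
        have hba : ¬ blk (2 * k) m (↑a : ℕ) ≤ j := by
          rw [blk_le_iff m hj2]; omega
        have hpfa : pf (sig m (j - 1)) (sig m j) ((m j : ℝ) / ((sig m (j - 1) : ℝ) * (sig m j : ℝ))) (↑a : ℕ) (↑b : ℕ) = 0 := pf_row3 _ _ _ _ hst.le ha2
        simp only [hpfa]
        have hS1 : ∑ i ∈ Finset.Ico 0 (sig m (j - 1)), (if max (blk (2 * k) m (↑a : ℕ)) (blk (2 * k) m i) % 2 = 0 then (1:ℝ) else 0) * ((0:ℝ) - pf (sig m (j - 1)) (sig m j) ((m j : ℝ) / ((sig m (j - 1) : ℝ) * (sig m j : ℝ))) i (↑b : ℕ))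
            = ((sig m (j - 1)) : ℝ) * ((if blk (2 * k) m (↑a : ℕ) % 2 = 0 then (1:ℝ) else 0) * ((0:ℝ) - cv1 (sig m (j - 1)) (sig m j) ((m j : ℝ) / ((sig m (j - 1) : ℝ) * (sig m j : ℝ))) (↑b : ℕ))) := by
          have e1 : ∀ i ∈ Finset.Ico 0 (sig m (j - 1)), (if max (blk (2 * k) m (↑a : ℕ)) (blk (2 * k) m i) % 2 = 0 then (1:ℝ) else 0) * ((0:ℝ) - pf (sig m (j - 1)) (sig m j) ((m j : ℝ) / ((sig m (j - 1) : ℝ) * (sig m j : ℝ))) i (↑b : ℕ))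
              = (if blk (2 * k) m (↑a : ℕ) % 2 = 0 then (1:ℝ) else 0) * ((0:ℝ) - cv1 (sig m (j - 1)) (sig m j) ((m j : ℝ) / ((sig m (j - 1) : ℝ) * (sig m j : ℝ))) (↑b : ℕ)) := by
            intro i hi
            have hbi : blk (2 * k) m i < j := (hlt i).2 (Finset.mem_Ico.1 hi).2
            rw [pf_row1 _ _ _ _ (Finset.mem_Ico.1 hi).2, max_eq_left (by omega)]
          rw [Finset.sum_congr rfl e1, Finset.sum_const, Nat.card_Ico, Nat.sub_zero,
              nsmul_eq_mul]
        have hS2 : ∑ i ∈ Finset.Ico (sig m (j - 1)) (sig m j), (if max (blk (2 * k) m (↑a : ℕ)) (blk (2 * k) m i) % 2 = 0 then (1:ℝ) else 0) * ((0:ℝ) - pf (sig m (j - 1)) (sig m j) ((m j : ℝ) / ((sig m (j - 1) : ℝ) * (sig m j : ℝ))) i (↑b : ℕ))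
            = (((sig m j) : ℝ) - ((sig m (j - 1)) : ℝ)) * ((if blk (2 * k) m (↑a : ℕ) % 2 = 0 then (1:ℝ) else 0) * ((0:ℝ) - cv2 (sig m j) (↑b : ℕ)))
              - (if (sig m (j - 1)) ≤ (↑b : ℕ) ∧ (↑b : ℕ) < (sig m j) then (1:ℝ) else 0) * (if blk (2 * k) m (↑a : ℕ) % 2 = 0 then (1:ℝ) else 0) := by
          have e2 : ∀ i ∈ Finset.Ico (sig m (j - 1)) (sig m j), (if max (blk (2 * k) m (↑a : ℕ)) (blk (2 * k) m i) % 2 = 0 then (1:ℝ) else 0) * ((0:ℝ) - pf (sig m (j - 1)) (sig m j) ((m j : ℝ) / ((sig m (j - 1) : ℝ) * (sig m j : ℝ))) i (↑b : ℕ))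
              = (if blk (2 * k) m (↑a : ℕ) % 2 = 0 then (1:ℝ) else 0) * ((0:ℝ) - cv2 (sig m j) (↑b : ℕ))
                - (if i = (↑b : ℕ) then (if blk (2 * k) m (↑a : ℕ) % 2 = 0 then (1:ℝ) else 0) else 0) := by
            intro i hi
            rw [Finset.mem_Ico] at hi
            have hbi : blk (2 * k) m i = j := (heq i).2 hi
            rw [hbi, pf_row2 _ _ _ _ hi.1 hi.2, max_eq_left (by omega)]
            split_ifs <;> ring1
          rw [Finset.sum_congr rfl e2, Finset.sum_sub_distrib, Finset.sum_const,
              Nat.card_Ico, nsmul_eq_mul, Finset.sum_ite_eq' (Finset.Ico (sig m (j - 1)) (sig m j)) (↑b : ℕ)]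
          simp only [Finset.mem_Ico]
          push_cast [Nat.cast_sub hst.le]
          split_ifs <;> ring1
        have hS3 : ∑ i ∈ Finset.Ico (sig m j) (sig m (2 * k)), (if max (blk (2 * k) m (↑a : ℕ)) (blk (2 * k) m i) % 2 = 0 then (1:ℝ) else 0) * ((0:ℝ) - pf (sig m (j - 1)) (sig m j) ((m j : ℝ) / ((sig m (j - 1) : ℝ) * (sig m j : ℝ))) i (↑b : ℕ)) = 0 := by
          apply Finset.sum_eq_zero
          intro i hi
          rw [pf_row3 _ _ _ _ hst.le (Finset.mem_Ico.1 hi).1, sub_zero, mul_zero]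
        rw [hS1, hS2, hS3]
        linear_combination (-(if blk (2 * k) m (↑a : ℕ) % 2 = 0 then (1:ℝ) else 0)) * hbr
end
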